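/- arXiv:2208.08383 — 5 statements merged into one kernel-verified Lean document; each statement's English description precedes it below -/
import Mathlib

section
/- Define a family of real numbers p : ℕ → ℕ → ℝ by p 0 0 = 1, p 0 l = 0 for l ≥ 1, and recursively p (n+1) l = p n l · ((n+1−l)/(n+2)) + p n (l−1) · (l/(n+2)) for n ∈ ℕ and l ∈ ℕ (where the term p n (l−1) · (l/(n+2)) is interpreted as 0 when l = 0). Then for every n ∈ ℕ one has p n l = 1/(n+1) for all l ≤ n, and p n l = 0 for all l > n. (Equivalently: the Markov chain (L_n) with L_0 = 0 and transition probabilities P[L_{n+1} = l | L_n = l] = (n+1−l)/(n+2), P[L_{n+1} = l+1 | L_n = l] = (l+1)/(n+2) satisfies L_n ~ Uniform{0,1,…,n} for every n.) -/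
/-- The marginals of the Markov chain `(L_n)` with `L_0 = 0` and
transitions `P[L_{n+1} = l | L_n = l] = (n+1-l)/(n+2)`,
`P[L_{n+1} = l+1 | L_n = l] = (l+1)/(n+2)` are uniform on `{0,…,n}`:
if `p n l` satisfies the corresponding recursion, then `p n l = 1/(n+1)` for `l ≤ n`
and `p n l = 0` for `l > n`. -/
theorem stmt0 (p : ℕ → ℕ → ℝ)
    (h00 : p 0 0 = 1)
    (h0l : ∀ l : ℕ, 1 ≤ l → p 0 l = 0)
    (hrec : ∀ n l : ℕ, p (n + 1) l =
      p n l * (((n : ℝ) + 1 - (l : ℝ)) / ((n : ℝ) + 2)) +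
        (if l = 0 then 0 else p n (l - 1) * ((l : ℝ) / ((n : ℝ) + 2)))) :
    ∀ n l : ℕ, (l ≤ n → p n l = 1 / ((n : ℝ) + 1)) ∧ (n < l → p n l = 0) := by
  intro n
  induction n with
  | zero =>
    intro l
    constructor
    · intro hl
      interval_cases l
      simpa using h00
    · intro hl
      exact h0l l hl
  | succ n ih =>
    intro l
    have key := hrec n l
    have hn2 : (n : ℝ) + 2 ≠ 0 := by positivity
    constructor
    · intro hl
      rcases Nat.eq_zero_or_pos l with h0 | hp
      · subst h0
        have h1 := (ih 0).1 (Nat.zero_le n)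
        rw [key, if_pos rfl, h1]
        push_cast
        field_simp
        ring
      · rcases lt_or_eq_of_le hl with h | h
        · have hln : l ≤ n := Nat.lt_succ_iff.mp h
          have h1 := (ih l).1 hln
          have h2 := (ih (l - 1)).1 (le_trans (Nat.sub_le l 1) hln)
          rw [key, if_neg (by omega), h1, h2]
          push_cast
          field_simp
          ring
        · have h1 := (ih l).2 (by omega)
          have h2 := (ih (l - 1)).1 (by omega)
          rw [key, if_neg (by omega), h1, h2]
          have hcast : (l : ℝ) = (n : ℝ) + 1 := by
            rw [h]; push_cast; ring
          rw [hcast]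
          push_cast
          field_simp
          ring
    · intro hl
      have h1 := (ih l).2 (by omega)
      have h2 := (ih (l - 1)).2 (by omega)
      rw [key, if_neg (by omega), h1, h2]
      ring
end

section
/- Let d ≥ 5 and let ρ be a probability measure on ℝ^d such that for every u ≠ 0 one has ρ({x : ⟨u, x⟩ = 0}) < 1. Let ρ̂(t) = ∫ exp(i⟨t,x⟩) dρ(x). Then there exists δ > 0 such that ∫_{B_0^δ} |1 − ρ̂(t)|^{−2} dt < ∞, where B_0^δ is the open Euclidean ball of radius δ centered at the origin and the integral is with respect to Lebesgue measure on ℝ^d. -/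
open MeasureTheory

section Aux

/-- Truncated quadratic function. -/
noncomputable def Ftr (M : ℕ) (s : ℝ) : ℝ := min (s ^ 2) (max ((M : ℝ) - |s|) 0)

lemma Ftr_nonneg (M : ℕ) (s : ℝ) : 0 ≤ Ftr M s := le_min (sq_nonneg s) (le_max_right _ _)

lemma Ftr_le_sq (M : ℕ) (s : ℝ) : Ftr M s ≤ s ^ 2 := min_le_left _ _

lemma Ftr_le_M (M : ℕ) (s : ℝ) : Ftr M s ≤ M := by
  refine (min_le_right _ _).trans (max_le (by linarith [abs_nonneg s]) M.cast_nonneg)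

lemma Ftr_mono (m n : ℕ) (h : m ≤ n) (s : ℝ) : Ftr m s ≤ Ftr n s := by
  refine min_le_min le_rfl (max_le_max ?_ le_rfl)
  have : (m : ℝ) ≤ n := Nat.cast_le.mpr h
  linarith

lemma Ftr_continuous (M : ℕ) : Continuous (Ftr M) := by
  unfold Ftr; fun_prop

/-- Key pointwise bound: for `0 ≤ r` with `r * M ≤ 1`,
`(2/π²) r² Ftr M s ≤ 1 - cos (r * s)`. -/
lemma key_cos_bound (M : ℕ) (r s : ℝ) (hr : 0 ≤ r) (hrM : r * M ≤ 1) :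
    2 / Real.pi ^ 2 * r ^ 2 * Ftr M s ≤ 1 - Real.cos (r * s) := by
  have hc : (0:ℝ) < 2 / Real.pi ^ 2 := by positivity
  rcases le_or_gt ((M : ℝ) - |s|) 0 with h | h
  · have h0 : Ftr M s = 0 := by
      have : max ((M : ℝ) - |s|) 0 = 0 := max_eq_right h
      have := Ftr_nonneg M s
      have h2 := min_le_right (s ^ 2) (max ((M : ℝ) - |s|) 0)
      unfold Ftr at *
      linarith
    rw [h0, mul_zero]
    have := Real.cos_le_one (r * s); linarith
  · -- |s| < M, so |r * s| ≤ 1 ≤ π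
    have hs : |s| < M := by linarith
    have habs : |r * s| ≤ 1 := by
      rw [abs_mul, abs_of_nonneg hr]
      calc r * |s| ≤ r * M := by
            apply mul_le_mul_of_nonneg_left (le_of_lt hs) hr
        _ ≤ 1 := hrM
    have hpi : |r * s| ≤ Real.pi := habs.trans (by linarith [Real.pi_gt_three])
    have hcos := Real.cos_le_one_sub_mul_cos_sq hpi
    have : 2 / Real.pi ^ 2 * (r * s) ^ 2 ≤ 1 - Real.cos (r * s) := by linarith
    calc 2 / Real.pi ^ 2 * r ^ 2 * Ftr M s ≤ 2 / Real.pi ^ 2 * r ^ 2 * s ^ 2 := by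
          apply mul_le_mul_of_nonneg_left (Ftr_le_sq M s) (by positivity)
      _ = 2 / Real.pi ^ 2 * (r * s) ^ 2 := by ring
      _ ≤ 1 - Real.cos (r * s) := this

lemma annulus_aux (n e : ℕ) (he : 1 ≤ e) (b kk : ℝ) (hb0 : 0 < b) (hb : b ≤ (1/2)^n)
    (hk : 0 < kk) :
    ((kk * (b / 2) ^ 2) ^ 2)⁻¹ * b ^ (e + 4) ≤ 16 / kk ^ 2 * (1 / 2) ^ n := by
  have hb1 : b ≤ 1 := hb.trans (pow_le_one₀ (by norm_num) (by norm_num))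
  have h1 : ((kk * (b / 2) ^ 2) ^ 2)⁻¹ * b ^ (e + 4) = 16 / kk ^ 2 * b ^ e := by
    rw [pow_add]
    field_simp
    ring
  rw [h1]
  have h2 : b ^ e ≤ b ^ 1 := pow_le_pow_of_le_one hb0.le hb1 he
  have h3 : b ^ e ≤ (1/2)^n := by rw [pow_one] at h2; exact h2.trans hb
  exact mul_le_mul_of_nonneg_left h3 (by positivity)

end Aux

/-- For `d ≥ 5` and a probability measure `ρ` on `ℝ^d` giving mass `< 1`
to every linear hyperplane, there is `δ > 0` with
`∫_{B_0^δ} |1 − ρ̂(t)|^{−2} dt < ∞` (Lebesgue measure). -/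
theorem stmt5 (d : ℕ) (hd : 5 ≤ d)
    (ρ : Measure (EuclideanSpace ℝ (Fin d))) [IsProbabilityMeasure ρ]
    (hfull : ∀ u : EuclideanSpace ℝ (Fin d), u ≠ 0 →
      ρ {x | (inner ℝ u x : ℝ) = 0} < 1) :
    ∃ δ : ℝ, 0 < δ ∧
      (∫⁻ t in Metric.ball (0 : EuclideanSpace ℝ (Fin d)) δ,
        (ENNReal.ofReal
          (‖(1 : ℂ) - ∫ x, Complex.exp (Complex.I * ((inner ℝ t x : ℝ) : ℂ)) ∂ρ‖ ^ 2))⁻¹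
        ∂volume) < ⊤ := by
  classical
  set E := EuclideanSpace ℝ (Fin d)
  haveI : Nontrivial E := by
    refine Module.nontrivial_of_finrank_pos (R := ℝ) ?_
    rw [finrank_euclideanSpace_fin]; omega
  set c : ℝ := 2 / Real.pi ^ 2 with hc_def
  have hc : 0 < c := by positivity
  -- the truncated moment function
  set g : ℕ → E → ℝ := fun M u => ∫ x, Ftr M (inner ℝ u x : ℝ) ∂ρ with hg_def
  -- integrability of the integrand
  have hmeas : ∀ (M : ℕ) (u : E), AEStronglyMeasurable (fun x => Ftr M (inner ℝ u x : ℝ)) ρ :=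
    fun M u => ((Ftr_continuous M).comp (continuous_const.inner continuous_id)).aestronglyMeasurable
  have hint : ∀ (M : ℕ) (u : E), Integrable (fun x => Ftr M (inner ℝ u x : ℝ)) ρ := by
    intro M u
    refine (integrable_const (M : ℝ)).mono' (hmeas M u) ?_
    filter_upwards with x
    rw [Real.norm_eq_abs, abs_of_nonneg (Ftr_nonneg _ _)]
    exact Ftr_le_M _ _
  -- Step A: positivity for each u ≠ 0
  have stepA : ∀ u : E, u ≠ 0 → ∃ M : ℕ, 0 < g M u := by
    intro u hu
    have hlt := hfull u hu
    have hpos : 0 < ρ {x : E | (inner ℝ u x : ℝ) ≠ 0} := by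
      have key : (1:ENNReal) ≤ ρ {x : E | (inner ℝ u x : ℝ) = 0} + ρ {x : E | (inner ℝ u x : ℝ) ≠ 0} := by
        rw [← measure_univ (μ := ρ)]
        refine le_trans (measure_mono ?_) (measure_union_le _ _)
        intro x _
        rcases eq_or_ne (inner ℝ u x : ℝ) 0 with h | h
        · exact Set.mem_union_left _ h
        · exact Set.mem_union_right _ h
      by_contra h
      push_neg at h
      have h0 : ρ {x : E | (inner ℝ u x : ℝ) ≠ 0} = 0 := le_antisymm h (zero_le)
      rw [h0, add_zero] at key
      exact absurd (lt_of_le_of_lt key hlt) (lt_irrefl _)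
    set A : ℕ → Set E := fun n => {x : E | 1 / (n + 1 : ℝ) ≤ |(inner ℝ u x : ℝ)| ∧ |(inner ℝ u x : ℝ)| ≤ n} with hA_def
    have hAmeas : ∀ n, MeasurableSet (A n) := by
      intro n
      have hcont : Continuous fun x : E => |(inner ℝ u x : ℝ)| :=
        (continuous_const.inner continuous_id).abs
      exact (isClosed_le continuous_const hcont).measurableSet.inter
        (isClosed_le hcont continuous_const).measurableSet
    have hcover : {x : E | (inner ℝ u x : ℝ) ≠ 0} ⊆ ⋃ n, A n := by
      intro x hx
      simp only [Set.mem_setOf_eq] at hx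
      have habs : 0 < |(inner ℝ u x : ℝ)| := abs_pos.mpr hx
      obtain ⟨n₁, hn₁⟩ := exists_nat_ge (1 / |(inner ℝ u x : ℝ)|)
      obtain ⟨n₂, hn₂⟩ := exists_nat_ge |(inner ℝ u x : ℝ)|
      refine Set.mem_iUnion.mpr ⟨n₁ + n₂, ?_, ?_⟩
      · rw [div_le_iff₀ habs] at hn₁
        rw [div_le_iff₀ (by positivity)]
        have : (n₁ : ℝ) ≤ (n₁ + n₂ : ℕ) + 1 := by push_cast; linarith [n₂.cast_nonneg (α := ℝ)]
        nlinarith [abs_nonneg (inner ℝ u x : ℝ)]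
      · calc |(inner ℝ u x : ℝ)| ≤ n₂ := hn₂
          _ ≤ ((n₁ + n₂ : ℕ) : ℝ) := by push_cast; linarith [n₁.cast_nonneg (α := ℝ)]
    obtain ⟨n, hn⟩ : ∃ n, 0 < ρ (A n) := by
      by_contra h
      push_neg at h
      have : ρ (⋃ n, A n) = 0 := measure_iUnion_null fun n => le_antisymm (h n) (zero_le)
      exact absurd (lt_of_lt_of_le hpos ((measure_mono hcover).trans this.le)) (lt_irrefl _)
    refine ⟨n + 1, ?_⟩
    have hlb : ∀ x ∈ A n, (1 / (n + 1 : ℝ)) ^ 2 ≤ Ftr (n + 1) (inner ℝ u x : ℝ) := by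
      intro x hx
      obtain ⟨h1, h2⟩ := hx
      refine le_min ?_ ?_
      · have h1' : 0 ≤ 1 / (n + 1 : ℝ) := by positivity
        calc (1 / (n + 1 : ℝ)) ^ 2 ≤ |(inner ℝ u x : ℝ)| ^ 2 := by nlinarith
          _ = (inner ℝ u x : ℝ) ^ 2 := sq_abs _
      · have hle1 : (1 / (n + 1 : ℝ)) ≤ 1 := by
          rw [div_le_one (by positivity)]; linarith [n.cast_nonneg (α := ℝ)]
        have : (1 / (n + 1 : ℝ)) ^ 2 ≤ 1 := by nlinarith [(by positivity : (0:ℝ) ≤ 1 / (n+1:ℝ))]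
        have h3 : (1:ℝ) ≤ ((n + 1 : ℕ) : ℝ) - |(inner ℝ u x : ℝ)| := by push_cast; linarith
        exact le_max_of_le_left (by linarith)
    have hfin : ρ (A n) ≠ ⊤ := (measure_lt_top ρ _).ne
    have hA_le : (1 / (n + 1 : ℝ)) ^ 2 * (ρ (A n)).toReal ≤ ∫ x in A n, Ftr (n + 1) (inner ℝ u x : ℝ) ∂ρ :=
      by have := setIntegral_ge_of_const_le (hAmeas n) hfin hlb ((hint (n+1) u).integrableOn); rw [smul_eq_mul, mul_comm] at this; exact this
    have hA_le2 : ∫ x in A n, Ftr (n + 1) (inner ℝ u x : ℝ) ∂ρ ≤ g (n + 1) u :=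
      setIntegral_le_integral (hint (n+1) u) (Filter.Eventually.of_forall fun x => Ftr_nonneg _ _)
    have htoReal : 0 < (ρ (A n)).toReal := ENNReal.toReal_pos hn.ne' hfin
    have : 0 < (1 / (n + 1 : ℝ)) ^ 2 * (ρ (A n)).toReal := by positivity
    linarith
  -- Step B: continuity of g M
  have stepB : ∀ M : ℕ, Continuous (g M) := by
    intro M
    apply continuous_of_dominated (bound := fun _ => (M : ℝ))
    · intro u; exact hmeas M u
    · intro u
      filter_upwards with x
      rw [Real.norm_eq_abs, abs_of_nonneg (Ftr_nonneg _ _)]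
      exact Ftr_le_M _ _
    · exact integrable_const _
    · filter_upwards with x
      exact (Ftr_continuous M).comp (continuous_id.inner continuous_const)
  -- Step C: uniform bound on sphere
  obtain ⟨N, c₀, hc₀, hsphere⟩ :
      ∃ (N : ℕ) (c₀ : ℝ), 0 < c₀ ∧ ∀ u ∈ Metric.sphere (0 : E) 1, c₀ ≤ g N u := by
    have hcomp : IsCompact (Metric.sphere (0 : E) 1) := isCompact_sphere 0 1
    have hcov : Metric.sphere (0 : E) 1 ⊆ ⋃ n : ℕ, {u : E | 0 < g n u} := by
      intro u hu
      have hu0 : u ≠ 0 := by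
        intro h; rw [Metric.mem_sphere, h] at hu; simp at hu
      obtain ⟨M, hM⟩ := stepA u hu0
      exact Set.mem_iUnion.mpr ⟨M, hM⟩
    obtain ⟨s, hs⟩ := hcomp.elim_finite_subcover (fun n : ℕ => {u : E | 0 < g n u})
      (fun n => isOpen_lt continuous_const (stepB n)) hcov
    set N := s.sup id with hN_def
    have hposN : ∀ u ∈ Metric.sphere (0 : E) 1, 0 < g N u := by
      intro u hu
      obtain ⟨n, hn, hgn⟩ := Set.mem_iUnion₂.mp (hs hu)
      have hnN : n ≤ N := Finset.le_sup (f := id) hn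
      calc (0:ℝ) < g n u := hgn
        _ ≤ g N u := integral_mono (hint n u) (hint N u) fun x => Ftr_mono n N hnN _
    have hne : (Metric.sphere (0 : E) 1).Nonempty := NormedSpace.sphere_nonempty.mpr zero_le_one
    obtain ⟨u₀, hu₀, hmin⟩ := hcomp.exists_isMinOn hne (stepB N).continuousOn
    exact ⟨N, g N u₀, hposN u₀ hu₀, fun u hu => hmin hu⟩
  -- δ
  set δ : ℝ := 1 / (N + 1 : ℝ) with hδ_def
  have hδ : 0 < δ := by positivity
  refine ⟨δ, hδ, ?_⟩
  set k : ℝ := c * c₀ with hk_def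
  have hk : 0 < k := mul_pos hc hc₀
  -- Step E: the key lower bound on |1 - φ(t)|
  have stepE : ∀ t : E, t ≠ 0 → ‖t‖ < δ →
      k * ‖t‖ ^ 2 ≤ ‖(1 : ℂ) - ∫ x, Complex.exp (Complex.I * ((inner ℝ t x : ℝ) : ℂ)) ∂ρ‖ := by
    intro t ht htδ
    set u : E := ‖t‖⁻¹ • t with hu_def
    have htn : 0 < ‖t‖ := norm_pos_iff.mpr ht
    have hu_sphere : u ∈ Metric.sphere (0 : E) 1 := by
      simp [hu_def, norm_smul, abs_of_nonneg (inv_nonneg.mpr htn.le), inv_mul_cancel₀ htn.ne']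
    have hinner : ∀ x : E, (inner ℝ t x : ℝ) = ‖t‖ * (inner ℝ u x : ℝ) := by
      intro x
      rw [hu_def, real_inner_smul_left]
      field_simp
    -- integrability of the characteristic function integrand
    have hφint : Integrable (fun x : E => Complex.exp (Complex.I * ((inner ℝ t x : ℝ) : ℂ))) ρ := by
      refine (integrable_const (1 : ℝ)).mono' ?_ ?_
      · apply Continuous.aestronglyMeasurable
        exact Complex.continuous_exp.comp
          (continuous_const.mul (Complex.continuous_ofReal.comp
            (continuous_const.inner continuous_id)))
      · filter_upwards with x
        rw [Complex.norm_exp]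
        simp
    have hcosint : Integrable (fun x : E => Real.cos (inner ℝ t x : ℝ)) ρ := by
      refine (integrable_const (1 : ℝ)).mono' ?_ ?_
      · apply Continuous.aestronglyMeasurable
        exact Real.continuous_cos.comp (continuous_const.inner continuous_id)
      · filter_upwards with x
        rw [Real.norm_eq_abs]
        exact Real.abs_cos_le_one _
    -- real part computation
    have hre : ((∫ x, Complex.exp (Complex.I * ((inner ℝ t x : ℝ) : ℂ)) ∂ρ)).re
        = ∫ x, Real.cos (inner ℝ t x : ℝ) ∂ρ := by
      rw [← RCLike.re_eq_complex_re, ← integral_re hφint]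
      congr 1
      ext x
      rw [RCLike.re_eq_complex_re, mul_comm, Complex.exp_ofReal_mul_I_re]
    -- bound
    have hbound : k * ‖t‖ ^ 2 ≤ 1 - ∫ x, Real.cos (inner ℝ t x : ℝ) ∂ρ := by
      have h1 : 1 - ∫ x, Real.cos (inner ℝ t x : ℝ) ∂ρ = ∫ x, (1 - Real.cos (inner ℝ t x : ℝ)) ∂ρ := by
        rw [integral_sub (integrable_const 1) hcosint]
        simp [measure_univ]; rfl
      rw [h1]
      have hintN : Integrable (fun x : E => c * ‖t‖ ^ 2 * Ftr N (inner ℝ u x : ℝ)) ρ :=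
        (hint N u).const_mul _
      have hint2 : Integrable (fun x : E => 1 - Real.cos (inner ℝ t x : ℝ)) ρ :=
        (integrable_const 1).sub hcosint
      have hptwise : ∀ x : E, c * ‖t‖ ^ 2 * Ftr N (inner ℝ u x : ℝ) ≤ 1 - Real.cos (inner ℝ t x : ℝ) := by
        intro x
        rw [hinner x]
        apply key_cos_bound N ‖t‖ _ htn.le
        have : ‖t‖ * N ≤ δ * N := mul_le_mul_of_nonneg_right htδ.le N.cast_nonneg
        calc ‖t‖ * N ≤ δ * N := this
          _ ≤ 1 := by
            rw [hδ_def]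
            rw [div_mul_eq_mul_div, div_le_one (by positivity)]
            linarith [N.cast_nonneg (α := ℝ)]
      calc k * ‖t‖ ^ 2 = c * ‖t‖ ^ 2 * c₀ := by ring
        _ ≤ c * ‖t‖ ^ 2 * g N u := by
            apply mul_le_mul_of_nonneg_left (hsphere u hu_sphere) (by positivity)
        _ = ∫ x, c * ‖t‖ ^ 2 * Ftr N (inner ℝ u x : ℝ) ∂ρ := by
            rw [hg_def]; exact (integral_const_mul _ _).symm
        _ ≤ ∫ x, (1 - Real.cos (inner ℝ t x : ℝ)) ∂ρ := integral_mono hintN hint2 hptwise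
    calc k * ‖t‖ ^ 2 ≤ 1 - ∫ x, Real.cos (inner ℝ t x : ℝ) ∂ρ := hbound
      _ = ((1 : ℂ) - ∫ x, Complex.exp (Complex.I * ((inner ℝ t x : ℝ) : ℂ)) ∂ρ).re := by
          rw [Complex.sub_re, Complex.one_re, hre]
      _ ≤ ‖(1 : ℂ) - ∫ x, Complex.exp (Complex.I * ((inner ℝ t x : ℝ) : ℂ)) ∂ρ‖ := by
          exact Complex.re_le_norm _
  -- Step F: finiteness of the integral
  obtain ⟨e, he, hde⟩ : ∃ e : ℕ, 1 ≤ e ∧ d = e + 4 := ⟨d - 4, by omega, by omega⟩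
  have hδ1 : δ ≤ 1 := by
    rw [hδ_def, div_le_one (by positivity)]
    linarith [N.cast_nonneg (α := ℝ)]
  set h : E → ENNReal := fun t => (ENNReal.ofReal ((k * ‖t‖ ^ 2) ^ 2))⁻¹ with hh_def
  have hmono1 : (∫⁻ t in Metric.ball (0 : E) δ,
        (ENNReal.ofReal
          (‖(1 : ℂ) - ∫ x, Complex.exp (Complex.I * ((inner ℝ t x : ℝ) : ℂ)) ∂ρ‖ ^ 2))⁻¹
        ∂volume)
      ≤ ∫⁻ t in Metric.ball (0 : E) δ, h t ∂volume := by
    refine lintegral_mono_ae ?_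
    have h1 : ∀ᵐ t ∂(volume.restrict (Metric.ball (0 : E) δ)), t ∈ Metric.ball (0 : E) δ :=
      ae_restrict_mem measurableSet_ball
    have h2 : ∀ᵐ t ∂(volume.restrict (Metric.ball (0 : E) δ)), t ≠ 0 := by
      refine ae_restrict_of_ae ?_
      rw [ae_iff]
      have : {t : E | ¬ t ≠ 0} = {0} := by ext t; simp
      rw [this]
      exact measure_singleton 0
    filter_upwards [h1, h2] with t htmem ht0
    have hE := stepE t ht0 (mem_ball_zero_iff.mp htmem)
    rw [hh_def]
    refine ENNReal.inv_le_inv.mpr (ENNReal.ofReal_le_ofReal ?_)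
    exact pow_le_pow_left₀ (by positivity) hE 2
  set B : ℕ → Set E := fun n => {x : E | δ / 2 ^ (n+1) ≤ ‖x‖} ∩ Metric.ball (0 : E) (δ / 2 ^ n)
    with hB_def
  have hcover : Metric.ball (0 : E) δ ⊆ {(0 : E)} ∪ ⋃ n, B n := by
    intro x hx
    rcases eq_or_ne x 0 with hx0 | hx0
    · exact Set.mem_union_left _ (by simp [hx0])
    · right
      have hxn : 0 < ‖x‖ := norm_pos_iff.mpr hx0
      have hxδ : ‖x‖ < δ := mem_ball_zero_iff.mp hx
      have hP : ∃ n : ℕ, δ / 2 ^ (n+1) ≤ ‖x‖ := by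
        obtain ⟨m, hm⟩ := exists_nat_ge (δ / ‖x‖)
        refine ⟨m, ?_⟩
        rw [div_le_iff₀ (by positivity)] at hm ⊢
        have h2m : (m : ℝ) ≤ 2 ^ (m+1) := by
          calc (m : ℝ) ≤ 2 ^ m := by exact_mod_cast (Nat.lt_two_pow_self (n := m)).le
            _ ≤ 2 ^ (m+1) := by
                apply pow_le_pow_right₀ (by norm_num) (by omega)
        have h2m1 : (1 : ℝ) ≤ 2 ^ (m+1) := one_le_pow₀ (by norm_num)
        nlinarith
      refine Set.mem_iUnion.mpr ⟨Nat.find hP, Nat.find_spec hP, mem_ball_zero_iff.mpr ?_⟩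
      rcases Nat.eq_zero_or_pos (Nat.find hP) with h0 | hpos
      · rw [h0]; simpa using hxδ
      · have hmin := Nat.find_min hP (Nat.sub_lt hpos one_pos)
        push_neg at hmin
        have heq : Nat.find hP - 1 + 1 = Nat.find hP := by omega
        rwa [heq] at hmin
  have hsplit : ∫⁻ t in Metric.ball (0 : E) δ, h t ∂volume
      ≤ ∫⁻ t in ({(0 : E)} : Set E), h t ∂volume + ∑' n, ∫⁻ t in B n, h t ∂volume := by
    refine (lintegral_mono_set hcover).trans ?_
    refine (lintegral_union_le _ _ _).trans ?_
    gcongr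
    exact lintegral_iUnion_le _ _
  have hzero : ∫⁻ t in ({(0 : E)} : Set E), h t ∂volume = 0 :=
    setLIntegral_measure_zero _ _ (measure_singleton 0)
  have hterm : ∀ n : ℕ, ∫⁻ t in B n, h t ∂volume
      ≤ (ENNReal.ofReal (16 / k ^ 2) * volume (Metric.ball (0 : E) 1)) * ENNReal.ofReal ((1/2 : ℝ) ^ n) := by
    intro n
    have hrn : (0 : ℝ) < δ / 2 ^ (n+1) := by positivity
    have hbn : (0 : ℝ) < δ / 2 ^ n := by positivity
    have hconst : ∀ t ∈ B n, h t ≤ ENNReal.ofReal (((k * (δ / 2 ^ (n+1)) ^ 2) ^ 2)⁻¹) := by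
      rintro t ⟨ht1, _⟩
      rw [hh_def, ENNReal.ofReal_inv_of_pos (by positivity)]
      refine ENNReal.inv_le_inv.mpr (ENNReal.ofReal_le_ofReal ?_)
      have h1 : δ / 2 ^ (n+1) ≤ ‖t‖ := ht1
      gcongr
    calc ∫⁻ t in B n, h t ∂volume
        ≤ ∫⁻ _ in B n, ENNReal.ofReal (((k * (δ / 2 ^ (n+1)) ^ 2) ^ 2)⁻¹) ∂volume :=
          setLIntegral_mono measurable_const hconst
      _ = ENNReal.ofReal (((k * (δ / 2 ^ (n+1)) ^ 2) ^ 2)⁻¹) * volume (B n) :=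
          setLIntegral_const _ _
      _ ≤ ENNReal.ofReal (((k * (δ / 2 ^ (n+1)) ^ 2) ^ 2)⁻¹)
            * volume (Metric.ball (0 : E) (δ / 2 ^ n)) := by
          exact mul_le_mul_right (measure_mono Set.inter_subset_right) _
      _ = ENNReal.ofReal (((k * (δ / 2 ^ (n+1)) ^ 2) ^ 2)⁻¹)
            * (ENNReal.ofReal ((δ / 2 ^ n) ^ d) * volume (Metric.ball (0 : E) 1)) := by
          rw [Measure.addHaar_ball volume (0 : E) hbn.le, finrank_euclideanSpace_fin]
      _ = (ENNReal.ofReal (((k * (δ / 2 ^ (n+1)) ^ 2) ^ 2)⁻¹ * (δ / 2 ^ n) ^ d))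
            * volume (Metric.ball (0 : E) 1) := by
          rw [ENNReal.ofReal_mul (by positivity)]; ring
      _ ≤ ENNReal.ofReal (16 / k ^ 2 * (1/2 : ℝ) ^ n) * volume (Metric.ball (0 : E) 1) := by
          refine mul_le_mul_left (ENNReal.ofReal_le_ofReal ?_) _
          have heq : δ / 2 ^ (n+1) = (δ / 2 ^ n) / 2 := by
            rw [pow_succ]; ring
          rw [heq, hde]
          refine annulus_aux n e he _ k hbn ?_ hk
          calc δ / 2 ^ n ≤ 1 / 2 ^ n := by gcongr
            _ = (1/2 : ℝ) ^ n := by rw [div_pow]; norm_num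
      _ = (ENNReal.ofReal (16 / k ^ 2) * volume (Metric.ball (0 : E) 1))
            * ENNReal.ofReal ((1/2 : ℝ) ^ n) := by
          rw [ENNReal.ofReal_mul (by positivity)]; ring
  have hsum : ∑' n, ∫⁻ t in B n, h t ∂volume
      ≤ (ENNReal.ofReal (16 / k ^ 2) * volume (Metric.ball (0 : E) 1))
          * ∑' n : ℕ, ENNReal.ofReal ((1/2 : ℝ)) ^ n := by
    rw [← ENNReal.tsum_mul_left]
    refine ENNReal.tsum_le_tsum fun n => (hterm n).trans_eq ?_
    rw [ENNReal.ofReal_pow (by norm_num)]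
  have hgeo : ∑' n : ℕ, ENNReal.ofReal ((1/2 : ℝ)) ^ n < ⊤ := by
    rw [ENNReal.tsum_geometric]
    rw [ENNReal.inv_lt_top, tsub_pos_iff_lt]
    exact ENNReal.ofReal_lt_one.mpr (by norm_num)
  calc (∫⁻ t in Metric.ball (0 : E) δ,
        (ENNReal.ofReal
          (‖(1 : ℂ) - ∫ x, Complex.exp (Complex.I * ((inner ℝ t x : ℝ) : ℂ)) ∂ρ‖ ^ 2))⁻¹
        ∂volume)
      ≤ ∫⁻ t in Metric.ball (0 : E) δ, h t ∂volume := hmono1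
    _ ≤ ∫⁻ t in ({(0 : E)} : Set E), h t ∂volume + ∑' n, ∫⁻ t in B n, h t ∂volume := hsplit
    _ ≤ 0 + (ENNReal.ofReal (16 / k ^ 2) * volume (Metric.ball (0 : E) 1))
          * ∑' n : ℕ, ENNReal.ofReal ((1/2 : ℝ)) ^ n := by
        rw [hzero]; gcongr
    _ < ⊤ := by
        rw [zero_add]
        exact ENNReal.mul_lt_top
          (ENNReal.mul_lt_top ENNReal.ofReal_lt_top measure_ball_lt_top) hgeo
end

section
/- Let ρ be a probability measure on ℝ^d with characteristic function ρ̂(z) = ∫ exp(i⟨z,x⟩) dρ(x). Let U := Σ_{n=0}^∞ ρ^{*n} and U⁻ := Σ_{n=0}^∞ (ρ⁻)^{*n} be the expected occupation measures of the random walks with step distributions ρ and ρ⁻ := ρ(−·). Then for every r > 0 there exists a finite constant c' > 0 (depending only on d and r) such that (U * U⁻)(B_0^r) ≤ c' · sup_{0 ≤ s < 1} ∫_{B_0^{√d / r}} |1 − s·ρ̂(z)|^{−2} dz, where the integral is with respect to Lebesgue measure on ℝ^d. -/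
open MeasureTheory

/-- Convolution of two measures on `ℝ^d`: the pushforward of the product measure
under addition. -/
noncomputable def mconv {d : ℕ} (μ ν : Measure (EuclideanSpace ℝ (Fin d))) :
    Measure (EuclideanSpace ℝ (Fin d)) :=
  Measure.map (fun p => p.1 + p.2) (μ.prod ν)

/-- Convolution powers: `ρ^{*0} = δ_0`, `ρ^{*(n+1)} = ρ^{*n} * ρ`. -/
noncomputable def convPow {d : ℕ} (ρ : Measure (EuclideanSpace ℝ (Fin d))) :
    ℕ → Measure (EuclideanSpace ℝ (Fin d))
  | 0 => Measure.dirac 0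
  | n + 1 => mconv (convPow ρ n) ρ

/-- Expected occupation measure `U = Σ_{n≥0} ρ^{*n}` of the random walk with step
distribution `ρ`. -/
noncomputable def occMeasure {d : ℕ} (ρ : Measure (EuclideanSpace ℝ (Fin d))) :
    Measure (EuclideanSpace ℝ (Fin d)) :=
  Measure.sum (fun n => convPow ρ n)

/-- Reflected measure `ρ⁻ = ρ(−·)`. -/
noncomputable def mrefl {d : ℕ} (ρ : Measure (EuclideanSpace ℝ (Fin d))) :
    Measure (EuclideanSpace ℝ (Fin d)) :=
  Measure.map (fun x => -x) ρ

section Aux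
open Complex Real


noncomputable def Kk (a u : ℝ) : ℝ := max (a - |u|) 0

noncomputable def F1 (a t : ℝ) : ℝ := if t = 0 then a^2 else 2*(1 - Real.cos (a*t))/t^2

lemma Kk_nonneg (a u : ℝ) : 0 ≤ Kk a u := le_max_right _ _
lemma Kk_le (a : ℝ) (u : ℝ) (ha : 0 ≤ a) : Kk a u ≤ a := by
  unfold Kk; rw [max_le_iff]; constructor
  · linarith [abs_nonneg u]
  · exact ha
lemma Kk_eq_zero {a u : ℝ} (h : a ≤ |u|) : Kk a u = 0 := by
  unfold Kk; rw [max_eq_right]; linarith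
lemma Kk_cont (a : ℝ) : Continuous (Kk a) := by
  unfold Kk; fun_prop

lemma Kk_support {a : ℝ} (ha : 0 < a) : Function.support (Kk a) ⊆ Set.Icc (-a) a := by
  intro u hu
  rcases le_or_gt a (|u|) with h | h
  · exact absurd (Kk_eq_zero h) hu
  · rw [abs_lt] at h; exact ⟨h.1.le, h.2.le⟩

lemma Kk_integrable {a : ℝ} (ha : 0 < a) : Integrable (Kk a) := by
  refine (Kk_cont a).integrable_of_hasCompactSupport ?_
  exact HasCompactSupport.intro isCompact_Icc (fun u hu => by
    by_contra h
    exact hu (Kk_support ha h))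

-- FTC step, t ≠ 0
lemma step_c {a t : ℝ} (ht : t ≠ 0) :
    ∫ u in (0:ℝ)..a, (a - u) * (2 * Real.cos (u*t)) = 2*(1 - Real.cos (a*t))/t^2 := by
  have H : ∀ u ∈ Set.uIcc (0:ℝ) a, HasDerivAt
      (fun u => 2 * ((a-u) * Real.sin (u*t) / t - (- Real.cos (u*t) / t^2) * (-1)))
      ((a - u) * (2 * Real.cos (u*t))) u := by
    intro u _
    have hsin : HasDerivAt (fun u : ℝ => Real.sin (u*t)) (Real.cos (u*t) * t) u := by
      refine ((Real.hasDerivAt_sin (u*t)).comp u ((hasDerivAt_id u).mul_const t)).congr_deriv ?_; ring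
    have hcos : HasDerivAt (fun u : ℝ => Real.cos (u*t)) (-Real.sin (u*t) * t) u := by
      refine ((Real.hasDerivAt_cos (u*t)).comp u ((hasDerivAt_id u).mul_const t)).congr_deriv ?_; ring
    have h1 : HasDerivAt (fun u : ℝ => (a-u) * Real.sin (u*t) / t)
        (((-1) * Real.sin (u*t) + (a-u) * (Real.cos (u*t) * t)) / t) u := by
      simpa using (((hasDerivAt_const u a).sub (hasDerivAt_id u)).mul hsin).div_const t
    have h2 : HasDerivAt (fun u : ℝ => (- Real.cos (u*t) / t^2) * (-1))
        ((-(-Real.sin (u*t) * t) / t^2) * (-1)) u := by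
      exact ((hcos.neg).div_const (t^2)).mul_const (-1)
    have := ((h1.sub h2).const_mul 2)
    refine this.congr_deriv ?_
    field_simp
    ring
  have := intervalIntegral.integral_eq_sub_of_hasDerivAt H ((Continuous.mul (by fun_prop) (by fun_prop)).intervalIntegrable _ _)
  rw [this]
  have hat : Real.sin (a * t) = Real.sin (a*t) := rfl
  simp [Real.sin_zero, Real.cos_zero]
  field_simp
  ring

lemma step_c0 {a : ℝ} : ∫ u in (0:ℝ)..a, (a - u) * 2 = a^2 := by
  have H : ∀ u ∈ Set.uIcc (0:ℝ) a, HasDerivAt (fun u => 2*a*u - u^2) ((a - u) * 2) u := by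
    intro u _
    have h1 : HasDerivAt (fun u : ℝ => 2*a*u) (2*a) u := by
      simpa using (hasDerivAt_id u).const_mul (2*a)
    have h2 : HasDerivAt (fun u : ℝ => u^2) (2*u) u := by
      simpa using (hasDerivAt_pow 2 u)
    refine (h1.sub h2).congr_deriv ?_; ring
  rw [intervalIntegral.integral_eq_sub_of_hasDerivAt H
    (((by fun_prop : Continuous fun u : ℝ => (a - u) * 2)).intervalIntegrable _ _)]
  ring

lemma exp_I_add_neg (x : ℝ) :
    Complex.exp (Complex.I * ((-x : ℝ) : ℂ)) + Complex.exp (Complex.I * (x : ℂ)) =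
      ((2 * Real.cos x : ℝ) : ℂ) := by
  rw [show Complex.I * ((-x : ℝ) : ℂ) = (-(x:ℝ):ℂ) * Complex.I by push_cast; ring,
    show Complex.I * ((x : ℝ) : ℂ) = ((x:ℝ):ℂ) * Complex.I by ring]
  simp only [Complex.exp_mul_I, Complex.ofReal_neg, Complex.sin_neg, Complex.cos_neg,
    Complex.ofReal_cos, Complex.ofReal_mul, Complex.ofReal_ofNat]
  ring

lemma F1_eq {a : ℝ} (ha : 0 < a) (t : ℝ) :
    ∫ u : ℝ, (Kk a u : ℂ) * Complex.exp (Complex.I * ((u * t : ℝ) : ℂ)) = ((F1 a t : ℝ) : ℂ) := by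
  set f : ℝ → ℂ := fun u => (Kk a u : ℂ) * Complex.exp (Complex.I * ((u * t : ℝ) : ℂ)) with hf
  have hfc : Continuous f := by
    apply Continuous.mul
    · exact Complex.continuous_ofReal.comp (Kk_cont a)
    · fun_prop
  have h0 : ∫ u : ℝ, f u = ∫ u in Set.Icc (-a) a, f u := by
    refine (setIntegral_eq_integral_of_forall_compl_eq_zero (fun u hu => ?_)).symm
    have : Kk a u = 0 := by
      by_contra h
      exact hu (Kk_support ha h)
    simp [hf, this]
  have h1 : ∫ u in Set.Icc (-a) a, f u = ∫ u in (-a)..a, f u := by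
    rw [intervalIntegral.integral_of_le (by linarith), integral_Icc_eq_integral_Ioc]
  have hii : ∀ b c : ℝ, IntervalIntegrable f volume b c := fun b c => hfc.intervalIntegrable b c
  have h2 : (∫ u in (-a)..(0:ℝ), f u) + ∫ u in (0:ℝ)..a, f u = ∫ u in (-a)..a, f u :=
    intervalIntegral.integral_add_adjacent_intervals (hii _ _) (hii _ _)
  have h3 : ∫ u in (-a)..(0:ℝ), f u = ∫ u in (0:ℝ)..a, f (-u) := by
    rw [intervalIntegral.integral_comp_neg fun u => f u]; norm_num
  have h4 : (∫ u in (0:ℝ)..a, (f (-u) + f u)) =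
      ∫ u in (0:ℝ)..a, (((a - u) * (2 * Real.cos (u*t)) : ℝ) : ℂ) := by
    apply intervalIntegral.integral_congr
    intro u hu
    rw [Set.uIcc_of_le (by linarith : (0:ℝ) ≤ a)] at hu
    have hKu : Kk a u = a - u := by
      unfold Kk
      rw [_root_.abs_of_nonneg hu.1, max_eq_left]; linarith [hu.2]
    have hKnu : Kk a (-u) = a - u := by
      unfold Kk
      rw [abs_neg, _root_.abs_of_nonneg hu.1, max_eq_left]; linarith [hu.2]
    simp only [hf, hKu, hKnu, neg_mul]
    rw [← mul_add, exp_I_add_neg (u*t)]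
    push_cast; ring
  have h5 : ∫ u in (0:ℝ)..a, (((a - u) * (2 * Real.cos (u*t)) : ℝ) : ℂ) =
      (((∫ u in (0:ℝ)..a, (a - u) * (2 * Real.cos (u*t)) : ℝ)) : ℂ) :=
    intervalIntegral.integral_ofReal
  have h6 := intervalIntegral.integral_add (μ := volume) (a := (0:ℝ)) (b := a)
    (f := fun u => f (-u)) (g := f)
    ((hfc.comp continuous_neg).intervalIntegrable _ _) (hii _ _)
  rw [h0, h1, ← h2, h3, ← h6, h4, h5]
  by_cases ht : t = 0
  · subst ht
    have : (∫ u in (0:ℝ)..a, (a - u) * (2 * Real.cos (u*0))) = ∫ u in (0:ℝ)..a, (a - u) * 2 := by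
      apply intervalIntegral.integral_congr
      intro u _
      simp
    rw [this, step_c0]
    simp [F1]
  · rw [step_c ht]
    rw [F1, if_neg ht]

lemma F1_nonneg {a : ℝ} (ha : 0 < a) (t : ℝ) : 0 ≤ F1 a t := by
  unfold F1
  split
  · positivity
  · have := Real.cos_le_one (a*t)
    exact div_nonneg (by linarith) (by positivity)

lemma int_Kk {a : ℝ} (ha : 0 < a) : ∫ u, Kk a u = a^2 := by
  have h2 : ∫ u : ℝ, (Kk a u : ℂ) = ((a^2 : ℝ) : ℂ) := by
    have h := F1_eq ha 0
    have h3 : F1 a 0 = a^2 := by simp [F1]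
    rw [h3] at h
    rw [← h]
    congr 1; funext u
    simp
  have h4 : ((∫ u, Kk a u : ℝ) : ℂ) = ((a^2:ℝ):ℂ) := by exact (integral_ofReal).symm.trans h2
  exact_mod_cast h4

lemma F1_le {a : ℝ} (ha : 0 < a) (t : ℝ) : F1 a t ≤ a^2 := by
  have h1 : F1 a t = ‖((F1 a t : ℝ) : ℂ)‖ := by
    rw [Complex.norm_real, Real.norm_eq_abs, _root_.abs_of_nonneg (F1_nonneg ha t)]
  rw [h1, ← F1_eq ha t]
  calc ‖∫ u : ℝ, (Kk a u : ℂ) * Complex.exp (Complex.I * ((u * t : ℝ) : ℂ))‖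
      ≤ ∫ u : ℝ, ‖(Kk a u : ℂ) * Complex.exp (Complex.I * ((u * t : ℝ) : ℂ))‖ :=
        norm_integral_le_integral_norm _
    _ = ∫ u : ℝ, Kk a u := by
        congr 1; funext u
        rw [norm_mul, Complex.norm_real, Real.norm_eq_abs, _root_.abs_of_nonneg (Kk_nonneg a u),
          show Complex.I * ((u * t : ℝ) : ℂ) = ((u*t : ℝ) : ℂ) * Complex.I from mul_comm _ _]
        simp only [Complex.ofReal_mul]
        rw [show ((u:ℂ)*(t:ℂ)) = ((u*t:ℝ):ℂ) by push_cast; ring, Complex.norm_exp_ofReal_mul_I,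
          mul_one]
    _ = a^2 := int_Kk ha

lemma F1_ge {a t : ℝ} (ha : 0 < a) (h : |a*t| ≤ 1) : 4/Real.pi^2 * a^2 ≤ F1 a t := by
  have hpi : (3:ℝ) < Real.pi := Real.pi_gt_three
  have hp2 : (9:ℝ) < Real.pi^2 := by nlinarith
  by_cases ht : t = 0
  · subst ht
    rw [F1, if_pos rfl]
    rw [div_mul_eq_mul_div, div_le_iff₀ (by positivity)]
    nlinarith [sq_nonneg a]
  · rw [F1, if_neg ht]
    have hcos := Real.cos_le_one_sub_mul_cos_sq (x := a*t) (by linarith [abs_nonneg (a*t)])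
    have ht2 : (0:ℝ) < t^2 := by positivity
    rw [le_div_iff₀ ht2]
    have h2 : 4/Real.pi^2*a^2*t^2 = 2*(2/Real.pi^2*(a*t)^2) := by ring
    linarith [hcos]

lemma F1_measurable (a : ℝ) : Measurable (F1 a) := by
  unfold F1
  exact Measurable.ite (measurableSet_singleton 0) measurable_const (by fun_prop)

section MultiDim
variable {d : ℕ}

noncomputable def gK (a : ℝ) (z : EuclideanSpace ℝ (Fin d)) : ℝ := ∏ j, Kk a (z j)
noncomputable def phiF (a : ℝ) (x : EuclideanSpace ℝ (Fin d)) : ℝ := ∏ j, F1 a (x j)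

lemma coord_abs_le_norm (x : EuclideanSpace ℝ (Fin d)) (j : Fin d) : |x j| ≤ ‖x‖ := by
  rw [EuclideanSpace.norm_eq]
  have h1 : |x j| = Real.sqrt (‖x j‖^2) := by
    rw [Real.norm_eq_abs, Real.sqrt_sq_eq_abs, _root_.abs_abs]
  rw [h1]
  apply Real.sqrt_le_sqrt
  exact Finset.single_le_sum (fun i _ => sq_nonneg (‖x i‖)) (Finset.mem_univ j)

lemma gK_nonneg (a : ℝ) (z : EuclideanSpace ℝ (Fin d)) : 0 ≤ gK a z :=
  Finset.prod_nonneg fun j _ => Kk_nonneg a (z j)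

lemma gK_le {a : ℝ} (ha : 0 < a) (z : EuclideanSpace ℝ (Fin d)) : gK a z ≤ a^d := by
  have := Finset.prod_le_prod (s := Finset.univ)
    (fun j (_ : j ∈ Finset.univ) => Kk_nonneg a (z j))
    (fun j (_ : j ∈ Finset.univ) => Kk_le a (z j) ha.le)
  simpa [Finset.prod_const, gK] using this

lemma phiF_nonneg {a : ℝ} (ha : 0 < a) (x : EuclideanSpace ℝ (Fin d)) : 0 ≤ phiF a x :=
  Finset.prod_nonneg fun j _ => F1_nonneg ha (x j)

lemma phiF_le {a : ℝ} (ha : 0 < a) (x : EuclideanSpace ℝ (Fin d)) : phiF a x ≤ (a^2)^d := by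
  have := Finset.prod_le_prod (s := Finset.univ)
    (fun j (_ : j ∈ Finset.univ) => F1_nonneg ha (x j))
    (fun j (_ : j ∈ Finset.univ) => F1_le ha (x j))
  simpa [Finset.prod_const, phiF] using this

lemma phiF_ge {a : ℝ} (ha : 0 < a) (x : EuclideanSpace ℝ (Fin d))
    (h : ∀ j, |a * x j| ≤ 1) : (4/Real.pi^2 * a^2)^d ≤ phiF a x := by
  have hc : 0 ≤ 4/Real.pi^2 * a^2 := by positivity
  have := Finset.prod_le_prod (s := Finset.univ)
    (fun j (_ : j ∈ Finset.univ) => hc)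
    (fun j (_ : j ∈ Finset.univ) => F1_ge ha (h j))
  simpa [Finset.prod_const, phiF] using this

lemma gK_eq_zero {a : ℝ} (ha : 0 < a) (hd : 1 ≤ d) {z : EuclideanSpace ℝ (Fin d)}
    (hz : Real.sqrt d * a ≤ ‖z‖) : gK a z = 0 := by
  have hex : ∃ j, a ≤ |z j| := by
    by_contra hc
    push_neg at hc
    have hne : (Finset.univ : Finset (Fin d)).Nonempty := by
      have : Nonempty (Fin d) := ⟨⟨0, hd⟩⟩
      exact Finset.univ_nonempty
    have hsum : ∑ i, ‖z i‖^2 < ∑ _i : Fin d, a^2 := by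
      apply Finset.sum_lt_sum_of_nonempty hne
      intro i _
      rw [Real.norm_eq_abs]
      have := hc i
      nlinarith [abs_nonneg (z i)]
    have h2 : ‖z‖ < Real.sqrt d * a := by
      rw [EuclideanSpace.norm_eq]
      calc Real.sqrt (∑ i, ‖z i‖^2) < Real.sqrt (∑ _i : Fin d, a^2) := by
            apply Real.sqrt_lt_sqrt (Finset.sum_nonneg fun i _ => sq_nonneg _) hsum
        _ = Real.sqrt (d * a^2) := by rw [Finset.sum_const]; simp [Finset.card_univ, nsmul_eq_mul]
        _ = Real.sqrt d * a := by
            rw [Real.sqrt_mul (Nat.cast_nonneg d), Real.sqrt_sq ha.le]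
    linarith
  obtain ⟨j, hj⟩ := hex
  exact Finset.prod_eq_zero (Finset.mem_univ j) (Kk_eq_zero hj)

lemma gK_cont (a : ℝ) : Continuous (gK (d := d) a) := by
  apply continuous_finset_prod
  intro j _
  exact (Kk_cont a).comp (by fun_prop)

lemma gK_integrable {a : ℝ} (ha : 0 < a) (hd : 1 ≤ d) :
    Integrable (gK (d := d) a) (volume : Measure (EuclideanSpace ℝ (Fin d))) := by
  apply (gK_cont a).integrable_of_hasCompactSupport
  apply HasCompactSupport.intro (isCompact_closedBall (0 : EuclideanSpace ℝ (Fin d)) (Real.sqrt d * a))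
  intro z hz
  apply gK_eq_zero ha hd
  simp only [Metric.mem_closedBall, dist_zero_right, not_le] at hz
  exact hz.le

lemma phiF_measurable (a : ℝ) : Measurable (phiF (d := d) a) := by
  apply Finset.measurable_prod
  intro j _
  exact (F1_measurable a).comp (by fun_prop)

lemma phiF_eq {a : ℝ} (ha : 0 < a) (x : EuclideanSpace ℝ (Fin d)) :
    ∫ z : EuclideanSpace ℝ (Fin d),
      (gK a z : ℂ) * Complex.exp (Complex.I * ((inner ℝ z x : ℝ) : ℂ)) ∂volume
      = ((phiF a x : ℝ) : ℂ) := by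
  have hP := (EuclideanSpace.volume_preserving_symm_measurableEquiv_toLp (Fin d)).symm
  rw [← hP.integral_comp (MeasurableEquiv.toLp 2 (Fin d → ℝ)).measurableEmbedding]
  have hco : ∀ (y : Fin d → ℝ) (j : Fin d),
      ((MeasurableEquiv.toLp 2 (Fin d → ℝ)) y) j = y j := fun y j => rfl
  have hstep : ∀ y : Fin d → ℝ,
      (gK a ((MeasurableEquiv.toLp 2 (Fin d → ℝ)) y) : ℂ) *
        Complex.exp (Complex.I * ((inner ℝ ((MeasurableEquiv.toLp 2 (Fin d → ℝ)) y) x : ℝ) : ℂ))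
      = ∏ j, ((Kk a (y j) : ℂ) * Complex.exp (Complex.I * ((y j * x j : ℝ) : ℂ))) := by
    intro y
    rw [Finset.prod_mul_distrib]
    congr 1
    · rw [gK]
      push_cast
      rfl
    · have hin : (inner ℝ ((MeasurableEquiv.toLp 2 (Fin d → ℝ)) y) x : ℝ)
          = ∑ j, y j * x j := by
        simp [PiLp.inner_apply, RCLike.inner_apply, hco, mul_comm]
      rw [hin, ← Complex.exp_sum]
      congr 1
      push_cast
      rw [Finset.mul_sum]
  calc ∫ y : Fin d → ℝ, (gK a ((MeasurableEquiv.toLp 2 (Fin d → ℝ)) y) : ℂ) *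
        Complex.exp (Complex.I * ((inner ℝ ((MeasurableEquiv.toLp 2 (Fin d → ℝ)) y) x : ℝ) : ℂ))
      = ∫ y : Fin d → ℝ, ∏ j, ((Kk a (y j) : ℂ) * Complex.exp (Complex.I * ((y j * x j : ℝ) : ℂ))) := by
        congr 1; funext y; exact hstep y
    _ = ∏ j, ∫ u : ℝ, (Kk a u : ℂ) * Complex.exp (Complex.I * ((u * x j : ℝ) : ℂ)) :=
        MeasureTheory.integral_fintype_prod_eq_prod
          (fun j u => (Kk a u : ℂ) * Complex.exp (Complex.I * ((u * x j : ℝ) : ℂ)))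
    _ = ∏ j, ((F1 a (x j) : ℝ) : ℂ) := by
        apply Finset.prod_congr rfl
        intro j _
        exact F1_eq ha (x j)
    _ = ((phiF a x : ℝ) : ℂ) := by rw [phiF]; push_cast; rfl

end MultiDim


section Char
variable {d : ℕ}

noncomputable def chf (μ : Measure (EuclideanSpace ℝ (Fin d)))
    (z : EuclideanSpace ℝ (Fin d)) : ℂ :=
  ∫ x, Complex.exp (Complex.I * ((inner ℝ z x : ℝ) : ℂ)) ∂μ

lemma norm_exp_I_mul (t : ℝ) : ‖Complex.exp (Complex.I * (t : ℂ))‖ = 1 := by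
  rw [mul_comm, Complex.norm_exp_ofReal_mul_I]

lemma exp_char_cont (z : EuclideanSpace ℝ (Fin d)) :
    Continuous fun x : EuclideanSpace ℝ (Fin d) =>
      Complex.exp (Complex.I * ((inner ℝ z x : ℝ) : ℂ)) := by
  apply Complex.continuous_exp.comp
  apply Continuous.mul continuous_const
  exact Complex.continuous_ofReal.comp (continuous_const.inner continuous_id)

lemma exp_char_cont' (x : EuclideanSpace ℝ (Fin d)) :
    Continuous fun z : EuclideanSpace ℝ (Fin d) =>
      Complex.exp (Complex.I * ((inner ℝ z x : ℝ) : ℂ)) := by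
  apply Complex.continuous_exp.comp
  apply Continuous.mul continuous_const
  exact Complex.continuous_ofReal.comp (continuous_id.inner continuous_const)

lemma integrable_exp_char (μ : Measure (EuclideanSpace ℝ (Fin d))) [IsFiniteMeasure μ]
    (z : EuclideanSpace ℝ (Fin d)) :
    Integrable (fun x => Complex.exp (Complex.I * ((inner ℝ z x : ℝ) : ℂ))) μ := by
  refine (integrable_const (1:ℝ)).mono' (exp_char_cont z).aestronglyMeasurable ?_
  filter_upwards with x
  rw [norm_exp_I_mul]

lemma norm_chf_le_one (μ : Measure (EuclideanSpace ℝ (Fin d))) [IsProbabilityMeasure μ]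
    (z : EuclideanSpace ℝ (Fin d)) : ‖chf μ z‖ ≤ 1 := by
  calc ‖chf μ z‖ ≤ ∫ x, ‖Complex.exp (Complex.I * ((inner ℝ z x : ℝ) : ℂ))‖ ∂μ :=
        norm_integral_le_integral_norm _
    _ = 1 := by
        simp only [norm_exp_I_mul]
        simp

lemma chf_continuous (μ : Measure (EuclideanSpace ℝ (Fin d))) [IsFiniteMeasure μ] :
    Continuous (chf μ) := by
  apply continuous_of_dominated (bound := fun _ => (1:ℝ))
    (fun z => (exp_char_cont z).aestronglyMeasurable)
  · intro z
    filter_upwards with x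
    rw [norm_exp_I_mul]
  · exact integrable_const 1
  · filter_upwards with x
    exact exp_char_cont' x

instance mconv.instIsProbabilityMeasure (μ ν : Measure (EuclideanSpace ℝ (Fin d)))
    [IsProbabilityMeasure μ] [IsProbabilityMeasure ν] : IsProbabilityMeasure (mconv μ ν) := by
  unfold mconv
  exact Measure.isProbabilityMeasure_map measurable_add.aemeasurable

instance convPow.instIsProbabilityMeasure (ρ : Measure (EuclideanSpace ℝ (Fin d)))
    [IsProbabilityMeasure ρ] (n : ℕ) : IsProbabilityMeasure (convPow ρ n) := by
  induction n with
  | zero => unfold convPow; infer_instance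
  | succ n ih => unfold convPow; exact mconv.instIsProbabilityMeasure _ _

instance mrefl.instIsProbabilityMeasure (ρ : Measure (EuclideanSpace ℝ (Fin d)))
    [IsProbabilityMeasure ρ] : IsProbabilityMeasure (mrefl ρ) := by
  unfold mrefl
  exact Measure.isProbabilityMeasure_map measurable_neg.aemeasurable

lemma chf_mconv (μ ν : Measure (EuclideanSpace ℝ (Fin d)))
    [IsFiniteMeasure μ] [IsFiniteMeasure ν] (z : EuclideanSpace ℝ (Fin d)) :
    chf (mconv μ ν) z = chf μ z * chf ν z := by
  unfold chf mconv
  rw [integral_map measurable_add.aemeasurable (exp_char_cont z).aestronglyMeasurable]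
  have : ∀ p : EuclideanSpace ℝ (Fin d) × EuclideanSpace ℝ (Fin d),
      Complex.exp (Complex.I * ((inner ℝ z (p.1 + p.2) : ℝ) : ℂ)) =
      Complex.exp (Complex.I * ((inner ℝ z p.1 : ℝ) : ℂ)) *
        Complex.exp (Complex.I * ((inner ℝ z p.2 : ℝ) : ℂ)) := by
    intro p
    rw [← Complex.exp_add, inner_add_right]
    push_cast
    ring_nf
  simp_rw [this]
  exact MeasureTheory.integral_prod_mul (L := ℂ) (μ := μ) (ν := ν)
    (fun x => Complex.exp (Complex.I * ((inner ℝ z x : ℝ) : ℂ)))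
    (fun x => Complex.exp (Complex.I * ((inner ℝ z x : ℝ) : ℂ)))

lemma chf_dirac0 (z : EuclideanSpace ℝ (Fin d)) :
    chf (Measure.dirac (0 : EuclideanSpace ℝ (Fin d))) z = 1 := by
  unfold chf
  rw [integral_dirac]
  simp

lemma chf_convPow (ρ : Measure (EuclideanSpace ℝ (Fin d))) [IsProbabilityMeasure ρ]
    (n : ℕ) (z : EuclideanSpace ℝ (Fin d)) : chf (convPow ρ n) z = chf ρ z ^ n := by
  induction n with
  | zero => rw [pow_zero]; exact chf_dirac0 z
  | succ n ih =>
      have : convPow ρ (n+1) = mconv (convPow ρ n) ρ := rfl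
      rw [this, chf_mconv, ih, pow_succ]

lemma chf_mrefl (ρ : Measure (EuclideanSpace ℝ (Fin d))) [IsProbabilityMeasure ρ]
    (z : EuclideanSpace ℝ (Fin d)) :
    chf (mrefl ρ) z = (starRingEnd ℂ) (chf ρ z) := by
  unfold chf mrefl
  rw [integral_map measurable_neg.aemeasurable (exp_char_cont z).aestronglyMeasurable]
  rw [← integral_conj]
  congr 1
  funext x
  rw [← Complex.exp_conj]
  congr 1
  rw [inner_neg_right]
  simp [Complex.conj_ofReal]
end Char

section Geom
variable {d : ℕ}

noncomputable def geomM (ρ : Measure (EuclideanSpace ℝ (Fin d))) (s : ℝ) :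
    Measure (EuclideanSpace ℝ (Fin d)) :=
  Measure.sum (fun n => ENNReal.ofReal (s^n) • convPow ρ n)

lemma geomM_univ (ρ : Measure (EuclideanSpace ℝ (Fin d))) [IsProbabilityMeasure ρ]
    {s : ℝ} (hs0 : 0 ≤ s) :
    geomM ρ s Set.univ = (1 - ENNReal.ofReal s)⁻¹ := by
  rw [geomM, Measure.sum_apply _ MeasurableSet.univ, ← ENNReal.tsum_geometric (ENNReal.ofReal s)]
  apply tsum_congr
  intro n
  rw [Measure.smul_apply, smul_eq_mul, measure_univ, mul_one, ← ENNReal.ofReal_pow hs0]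

lemma geomM_finite (ρ : Measure (EuclideanSpace ℝ (Fin d))) [IsProbabilityMeasure ρ]
    {s : ℝ} (hs0 : 0 ≤ s) (hs1 : s < 1) :
    IsFiniteMeasure (geomM ρ s) := by
  constructor
  rw [geomM_univ ρ hs0]
  rw [ENNReal.inv_lt_top, tsub_pos_iff_lt]
  exact ENNReal.ofReal_lt_one.mpr hs1

lemma chf_geomM (ρ : Measure (EuclideanSpace ℝ (Fin d))) [IsProbabilityMeasure ρ]
    {s : ℝ} (hs0 : 0 ≤ s) (hs1 : s < 1) (z : EuclideanSpace ℝ (Fin d)) :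
    chf (geomM ρ s) z = (1 - (s:ℂ) * chf ρ z)⁻¹ := by
  haveI := geomM_finite ρ hs0 hs1
  have hint : Integrable (fun x => Complex.exp (Complex.I * ((inner ℝ z x : ℝ) : ℂ))) (geomM ρ s) :=
    integrable_exp_char _ z
  have h1 : chf (geomM ρ s) z
      = ∑' n : ℕ, ∫ x, Complex.exp (Complex.I * ((inner ℝ z x : ℝ) : ℂ))
          ∂(ENNReal.ofReal (s^n) • convPow ρ n) := by
    rw [chf, geomM]
    exact MeasureTheory.integral_sum_measure (by rw [geomM] at hint; exact hint)
  rw [h1]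
  have h2 : ∀ n : ℕ, (∫ x, Complex.exp (Complex.I * ((inner ℝ z x : ℝ) : ℂ))
      ∂(ENNReal.ofReal (s^n) • convPow ρ n)) = ((s:ℂ) * chf ρ z)^n := by
    intro n
    rw [integral_smul_measure, ENNReal.toReal_ofReal (by positivity)]
    have : (∫ x, Complex.exp (Complex.I * ((inner ℝ z x : ℝ) : ℂ)) ∂(convPow ρ n))
        = chf ρ z ^ n := chf_convPow ρ n z
    rw [this, mul_pow, Complex.real_smul]
    push_cast
    ring
  rw [tsum_congr h2]
  apply tsum_geometric_of_norm_lt_one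
  calc ‖(s:ℂ) * chf ρ z‖ = s * ‖chf ρ z‖ := by
        rw [norm_mul, Complex.norm_real, Real.norm_eq_abs, _root_.abs_of_nonneg hs0]
    _ ≤ s * 1 := by
        apply mul_le_mul_of_nonneg_left (norm_chf_le_one ρ z) hs0
    _ < 1 := by linarith

end Geom

section Expand
variable {d : ℕ}

lemma mconv_univ (μ ν : Measure (EuclideanSpace ℝ (Fin d))) [SFinite ν] :
    mconv μ ν Set.univ = μ Set.univ * ν Set.univ := by
  rw [mconv, Measure.map_apply measurable_add MeasurableSet.univ]
  have : (fun p : EuclideanSpace ℝ (Fin d) × EuclideanSpace ℝ (Fin d) => p.1 + p.2) ⁻¹' Set.univ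
      = Set.univ ×ˢ Set.univ := by simp
  rw [this, Measure.prod_prod]

lemma mconv_finite (μ ν : Measure (EuclideanSpace ℝ (Fin d)))
    [IsFiniteMeasure μ] [IsFiniteMeasure ν] : IsFiniteMeasure (mconv μ ν) := by
  constructor
  rw [mconv_univ]
  exact ENNReal.mul_lt_top (measure_lt_top μ _) (measure_lt_top ν _)

lemma mconv_sum_sum (μ ν : ℕ → Measure (EuclideanSpace ℝ (Fin d))) [∀ n, SFinite (ν n)] :
    mconv (Measure.sum μ) (Measure.sum ν)
      = Measure.sum (fun p : ℕ × ℕ => mconv (μ p.1) (ν p.2)) := by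
  unfold mconv
  rw [Measure.prod_sum, Measure.map_sum measurable_add.aemeasurable]

lemma prod_smul_smul (μ ν : Measure (EuclideanSpace ℝ (Fin d))) [SFinite ν]
    (c c' : ENNReal) (hc' : c' ≠ ⊤) :
    (c • μ).prod (c' • ν) = (c * c') • (μ.prod ν) := by
  ext A hA
  rw [Measure.smul_apply, smul_eq_mul, Measure.prod_apply hA, Measure.prod_apply hA,
    lintegral_smul_measure]
  have : ∀ x, (c' • ν) ((fun y => (x, y)) ⁻¹' A) = c' * ν ((fun y => (x, y)) ⁻¹' A) := by
    intro x; rw [Measure.smul_apply, smul_eq_mul]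
  calc c • ∫⁻ x, (c' • ν) (Prod.mk x ⁻¹' A) ∂μ
      = c * ∫⁻ x, c' * ν (Prod.mk x ⁻¹' A) ∂μ := by
        rw [smul_eq_mul]; congr 1
    _ = c * (c' * ∫⁻ x, ν (Prod.mk x ⁻¹' A) ∂μ) := by
        rw [lintegral_const_mul' c' _ hc']
    _ = (c * c') * ∫⁻ x, ν (Prod.mk x ⁻¹' A) ∂μ := by ring

lemma mconv_smul_smul (μ ν : Measure (EuclideanSpace ℝ (Fin d))) [SFinite ν]
    (c c' : ENNReal) (hc' : c' ≠ ⊤) :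
    mconv (c • μ) (c' • ν) = (c * c') • mconv μ ν := by
  unfold mconv
  rw [prod_smul_smul μ ν c c' hc', Measure.map_smul]

lemma occ_mconv_apply (ρ : Measure (EuclideanSpace ℝ (Fin d))) [IsProbabilityMeasure ρ]
    {A : Set (EuclideanSpace ℝ (Fin d))} (hA : MeasurableSet A) :
    mconv (occMeasure ρ) (occMeasure (mrefl ρ)) A
      = ∑' p : ℕ × ℕ, mconv (convPow ρ p.1) (convPow (mrefl ρ) p.2) A := by
  rw [occMeasure, occMeasure, mconv_sum_sum, Measure.sum_apply _ hA]

lemma geom_mconv_apply (ρ : Measure (EuclideanSpace ℝ (Fin d))) [IsProbabilityMeasure ρ]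
    {s : ℝ} (hs0 : 0 ≤ s)
    {A : Set (EuclideanSpace ℝ (Fin d))} (hA : MeasurableSet A) :
    mconv (geomM ρ s) (geomM (mrefl ρ) s) A
      = ∑' p : ℕ × ℕ, ENNReal.ofReal (s^(p.1+p.2)) *
          mconv (convPow ρ p.1) (convPow (mrefl ρ) p.2) A := by
  rw [geomM, geomM, mconv_sum_sum, Measure.sum_apply _ hA]
  apply tsum_congr
  intro p
  rw [mconv_smul_smul _ _ _ _ ENNReal.ofReal_ne_top, Measure.smul_apply, smul_eq_mul,
    ← ENNReal.ofReal_mul (by positivity), ← pow_add]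

end Expand

section KeyIdentity
variable {d : ℕ}

lemma key_identity (hd : 1 ≤ d) {a : ℝ} (ha : 0 < a)
    (μ ν : Measure (EuclideanSpace ℝ (Fin d))) [IsFiniteMeasure μ] [IsFiniteMeasure ν] :
    ((∫ x, phiF a x ∂(mconv μ ν) : ℝ) : ℂ)
      = ∫ z, (gK a z : ℂ) * (chf μ z * chf ν z) ∂volume := by
  have hφm : Measurable (phiF (d := d) a) := phiF_measurable a
  have step1 : ∫ x, phiF a x ∂(mconv μ ν) = ∫ p, phiF a (p.1 + p.2) ∂(μ.prod ν) := by
    rw [mconv, integral_map measurable_add.aemeasurable hφm.aestronglyMeasurable]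
  have hg : Integrable (fun z => (gK (d := d) a z : ℂ)) volume := (gK_integrable ha hd).ofReal
  have hgmeas : AEStronglyMeasurable
      (fun q : (EuclideanSpace ℝ (Fin d) × EuclideanSpace ℝ (Fin d)) × EuclideanSpace ℝ (Fin d) =>
        (gK a q.2 : ℂ)) ((μ.prod ν).prod volume) :=
    (Complex.continuous_ofReal.comp ((gK_cont a).comp continuous_snd)).aestronglyMeasurable
  have hbase : Integrable
      (fun q : (EuclideanSpace ℝ (Fin d) × EuclideanSpace ℝ (Fin d)) × EuclideanSpace ℝ (Fin d) =>
        (gK a q.2 : ℂ)) ((μ.prod ν).prod volume) := by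
    rw [MeasureTheory.integrable_prod_iff hgmeas]
    constructor
    · filter_upwards with p
      exact hg
    · have : (fun x : EuclideanSpace ℝ (Fin d) × EuclideanSpace ℝ (Fin d) =>
          ∫ y, ‖((gK a ((x, y) : (_ × _) × _).2 : ℝ) : ℂ)‖ ∂volume)
          = fun _ => ∫ y : EuclideanSpace ℝ (Fin d), ‖((gK a y : ℝ) : ℂ)‖ ∂volume := rfl
      rw [this]
      exact integrable_const _
  have hexp_cont : Continuous
      (fun q : (EuclideanSpace ℝ (Fin d) × EuclideanSpace ℝ (Fin d)) × EuclideanSpace ℝ (Fin d) =>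
        Complex.exp (Complex.I * ((inner ℝ q.2 (q.1.1 + q.1.2) : ℝ) : ℂ))) := by
    apply Complex.continuous_exp.comp
    apply continuous_const.mul
    apply Complex.continuous_ofReal.comp
    exact continuous_inner.comp (by fun_prop :
      Continuous (fun q : (EuclideanSpace ℝ (Fin d) × EuclideanSpace ℝ (Fin d)) × EuclideanSpace ℝ (Fin d) => (q.2, q.1.1 + q.1.2)))
  have hInt : Integrable
      (Function.uncurry (fun (p : EuclideanSpace ℝ (Fin d) × EuclideanSpace ℝ (Fin d))
        (z : EuclideanSpace ℝ (Fin d)) =>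
        (gK a z : ℂ) * Complex.exp (Complex.I * ((inner ℝ z (p.1 + p.2) : ℝ) : ℂ))))
      ((μ.prod ν).prod volume) := by
    have h1 := hbase.bdd_mul (c := 1) hexp_cont.aestronglyMeasurable
      (by filter_upwards with q; rw [norm_exp_I_mul])
    apply h1.congr
    filter_upwards with q
    exact mul_comm _ _
  calc ((∫ x, phiF a x ∂(mconv μ ν) : ℝ) : ℂ)
      = ((∫ p, phiF a (p.1 + p.2) ∂(μ.prod ν) : ℝ) : ℂ) := by rw [step1]
    _ = ∫ p, ((phiF a (p.1 + p.2) : ℝ) : ℂ) ∂(μ.prod ν) := integral_ofReal.symm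
    _ = ∫ p, ∫ z, (gK a z : ℂ) *
          Complex.exp (Complex.I * ((inner ℝ z (p.1 + p.2) : ℝ) : ℂ)) ∂volume ∂(μ.prod ν) := by
        congr 1
        funext p
        exact (phiF_eq ha (p.1 + p.2)).symm
    _ = ∫ z, ∫ p, (gK a z : ℂ) *
          Complex.exp (Complex.I * ((inner ℝ z (p.1 + p.2) : ℝ) : ℂ)) ∂(μ.prod ν) ∂volume :=
        MeasureTheory.integral_integral_swap hInt
    _ = ∫ z, (gK a z : ℂ) * (chf μ z * chf ν z) ∂volume := by
        congr 1
        funext z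
        rw [MeasureTheory.integral_const_mul]
        congr 1
        have hsplit : ∀ p : EuclideanSpace ℝ (Fin d) × EuclideanSpace ℝ (Fin d),
            Complex.exp (Complex.I * ((inner ℝ z (p.1 + p.2) : ℝ) : ℂ)) =
            Complex.exp (Complex.I * ((inner ℝ z p.1 : ℝ) : ℂ)) *
              Complex.exp (Complex.I * ((inner ℝ z p.2 : ℝ) : ℂ)) := by
          intro p
          rw [← Complex.exp_add, inner_add_right]
          push_cast
          ring_nf
        simp_rw [hsplit]
        exact MeasureTheory.integral_prod_mul (L := ℂ) (μ := μ) (ν := ν)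
          (fun x => Complex.exp (Complex.I * ((inner ℝ z x : ℝ) : ℂ)))
          (fun x => Complex.exp (Complex.I * ((inner ℝ z x : ℝ) : ℂ)))

end KeyIdentity

section PerS
variable {d : ℕ}

lemma norm_one_sub_ge (ρ : Measure (EuclideanSpace ℝ (Fin d))) [IsProbabilityMeasure ρ]
    {s : ℝ} (hs0 : 0 ≤ s) (hs1 : s < 1) (z : EuclideanSpace ℝ (Fin d)) :
    1 - s ≤ ‖1 - (s:ℂ) * chf ρ z‖ := by
  have h1 : ‖(s:ℂ) * chf ρ z‖ ≤ s := by
    rw [norm_mul, Complex.norm_real, Real.norm_eq_abs, _root_.abs_of_nonneg hs0]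
    calc s * ‖chf ρ z‖ ≤ s * 1 := mul_le_mul_of_nonneg_left (norm_chf_le_one ρ z) hs0
      _ = s := mul_one s
  calc 1 - s ≤ ‖(1:ℂ)‖ - ‖(s:ℂ) * chf ρ z‖ := by rw [norm_one]; linarith
    _ ≤ ‖1 - (s:ℂ) * chf ρ z‖ := norm_sub_norm_le _ _

lemma chf_prod_eq (ρ : Measure (EuclideanSpace ℝ (Fin d))) [IsProbabilityMeasure ρ]
    {s : ℝ} (hs0 : 0 ≤ s) (hs1 : s < 1) (z : EuclideanSpace ℝ (Fin d)) :
    chf (geomM ρ s) z * chf (geomM (mrefl ρ) s) z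
      = (((‖1 - (s:ℂ) * chf ρ z‖^2)⁻¹ : ℝ) : ℂ) := by
  rw [chf_geomM ρ hs0 hs1 z, chf_geomM (mrefl ρ) hs0 hs1 z, chf_mrefl ρ z]
  have hconj : 1 - (s:ℂ) * (starRingEnd ℂ) (chf ρ z)
      = (starRingEnd ℂ) (1 - (s:ℂ) * chf ρ z) := by
    rw [map_sub, map_one, map_mul, Complex.conj_ofReal]
  rw [hconj, ← mul_inv, Complex.mul_conj]
  rw [Complex.normSq_eq_norm_sq]
  push_cast
  rfl

lemma w_integrable (ρ : Measure (EuclideanSpace ℝ (Fin d))) [IsProbabilityMeasure ρ]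
    (hd : 1 ≤ d) {a : ℝ} (ha : 0 < a) {s : ℝ} (hs0 : 0 ≤ s) (hs1 : s < 1) :
    Integrable (fun z => gK a z * (‖1 - (s:ℂ) * chf ρ z‖^2)⁻¹)
      (volume : Measure (EuclideanSpace ℝ (Fin d))) := by
  have hcont : Continuous (fun z : EuclideanSpace ℝ (Fin d) => (‖1 - (s:ℂ) * chf ρ z‖^2)⁻¹) := by
    apply Continuous.inv₀
    · have := chf_continuous ρ
      fun_prop
    · intro z
      have h0 : 0 < ‖1 - (s:ℂ) * chf ρ z‖ := lt_of_lt_of_le (by linarith) (norm_one_sub_ge ρ hs0 hs1 z)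
      exact pow_ne_zero 2 h0.ne'
  have h1 := (gK_integrable ha hd).bdd_mul (c := ((1-s)^2)⁻¹) hcont.aestronglyMeasurable ?_
  · apply h1.congr
    filter_upwards with z
    exact mul_comm _ _
  · filter_upwards with z
    have hge := norm_one_sub_ge ρ hs0 hs1 z
    have h2 : (1-s)^2 ≤ ‖1 - (s:ℂ) * chf ρ z‖^2 := by nlinarith [norm_nonneg (1 - (s:ℂ) * chf ρ z)]
    rw [Real.norm_eq_abs, _root_.abs_of_nonneg (by positivity)]
    exact inv_anti₀ (by nlinarith) h2

lemma integral_phiF_eq (ρ : Measure (EuclideanSpace ℝ (Fin d))) [IsProbabilityMeasure ρ]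
    (hd : 1 ≤ d) {a : ℝ} (ha : 0 < a) {s : ℝ} (hs0 : 0 ≤ s) (hs1 : s < 1) :
    ∫ x, phiF a x ∂(mconv (geomM ρ s) (geomM (mrefl ρ) s))
      = ∫ z, gK a z * (‖1 - (s:ℂ) * chf ρ z‖^2)⁻¹ ∂volume := by
  haveI := geomM_finite ρ hs0 hs1
  haveI := geomM_finite (mrefl ρ) hs0 hs1
  have h1 := key_identity hd ha (geomM ρ s) (geomM (mrefl ρ) s)
  have h2 : ∫ z, (gK a z : ℂ) * (chf (geomM ρ s) z * chf (geomM (mrefl ρ) s) z) ∂volume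
      = ∫ z, ((gK a z * (‖1 - (s:ℂ) * chf ρ z‖^2)⁻¹ : ℝ) : ℂ) ∂volume := by
    congr 1
    funext z
    rw [chf_prod_eq ρ hs0 hs1 z]
    push_cast
    ring
  have h3 : ∫ z, ((gK a z * (‖1 - (s:ℂ) * chf ρ z‖^2)⁻¹ : ℝ) : ℂ) ∂volume
      = ((∫ z, gK a z * (‖1 - (s:ℂ) * chf ρ z‖^2)⁻¹ ∂volume : ℝ) : ℂ) := integral_ofReal
  rw [h2, h3] at h1
  exact_mod_cast h1

end PerS

section Master
variable {d : ℕ}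

lemma per_s_bound (ρ : Measure (EuclideanSpace ℝ (Fin d))) [IsProbabilityMeasure ρ]
    (hd : 1 ≤ d) {r : ℝ} (hr : 0 < r) {s : ℝ} (hs0 : 0 ≤ s) (hs1 : s < 1) :
    mconv (geomM ρ s) (geomM (mrefl ρ) s) (Metric.ball 0 r)
      ≤ ENNReal.ofReal ((((4/Real.pi^2) * r⁻¹^2)^d)⁻¹ * r⁻¹^d) *
        ∫⁻ z in Metric.ball (0 : EuclideanSpace ℝ (Fin d)) (Real.sqrt d * r⁻¹),
          (ENNReal.ofReal (‖1 - (s:ℂ) * chf ρ z‖^2))⁻¹ ∂volume := by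
  have hpi : (3:ℝ) < Real.pi := Real.pi_gt_three
  set a : ℝ := r⁻¹ with ha_def
  have ha : 0 < a := by positivity
  set c₀ : ℝ := (4/Real.pi^2 * a^2)^d with hc0_def
  have hc0 : 0 < c₀ := by positivity
  haveI := geomM_finite ρ hs0 hs1
  haveI := geomM_finite (mrefl ρ) hs0 hs1
  set M := mconv (geomM ρ s) (geomM (mrefl ρ) s) with hM_def
  haveI : IsFiniteMeasure M := mconv_finite _ _
  set w : EuclideanSpace ℝ (Fin d) → ℝ := fun z => gK a z * (‖1 - (s:ℂ) * chf ρ z‖^2)⁻¹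
    with hw_def
  set L : ENNReal := ∫⁻ z in Metric.ball (0 : EuclideanSpace ℝ (Fin d)) (Real.sqrt d * a),
      (ENNReal.ofReal (‖1 - (s:ℂ) * chf ρ z‖^2))⁻¹ ∂volume with hL_def
  have hφ_int : Integrable (phiF a) M := by
    refine (integrable_const ((a^2)^d)).mono' (phiF_measurable a).aestronglyMeasurable ?_
    filter_upwards with x
    rw [Real.norm_eq_abs, _root_.abs_of_nonneg (phiF_nonneg ha x)]
    exact phiF_le ha x
  have real1 : c₀ * (M (Metric.ball 0 r)).toReal ≤ ∫ x, phiF a x ∂M := by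
    have hb : ∀ x ∈ Metric.ball (0 : EuclideanSpace ℝ (Fin d)) r, c₀ ≤ phiF a x := by
      intro x hx
      apply phiF_ge ha
      intro j
      rw [abs_mul, _root_.abs_of_nonneg ha.le]
      rw [Metric.mem_ball, dist_zero_right] at hx
      calc a * |x j| ≤ a * ‖x‖ := mul_le_mul_of_nonneg_left (coord_abs_le_norm x j) ha.le
        _ ≤ a * r := mul_le_mul_of_nonneg_left hx.le ha.le
        _ = 1 := inv_mul_cancel₀ hr.ne'
    calc c₀ * (M (Metric.ball 0 r)).toReal
        = ∫ _x in Metric.ball (0 : EuclideanSpace ℝ (Fin d)) r, c₀ ∂M := by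
          rw [setIntegral_const, smul_eq_mul, mul_comm]; rfl
      _ ≤ ∫ x in Metric.ball (0 : EuclideanSpace ℝ (Fin d)) r, phiF a x ∂M := by
          apply setIntegral_mono_on
          · exact integrableOn_const (C := c₀) (measure_ne_top M _)
          · exact hφ_int.integrableOn
          · exact measurableSet_ball
          · exact hb
      _ ≤ ∫ x, phiF a x ∂M := by
          apply setIntegral_le_integral hφ_int
          filter_upwards with x
          exact phiF_nonneg ha x
  have enn1 : ENNReal.ofReal c₀ * M (Metric.ball 0 r) ≤ ENNReal.ofReal (∫ x, phiF a x ∂M) := by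
    rw [← ENNReal.ofReal_toReal (measure_ne_top M (Metric.ball 0 r)),
      ← ENNReal.ofReal_mul hc0.le]
    exact ENNReal.ofReal_le_ofReal real1
  have hJ : ∫ x, phiF a x ∂M = ∫ z, w z ∂volume := integral_phiF_eq ρ hd ha hs0 hs1
  have enn2 : ENNReal.ofReal (∫ z, w z ∂volume) = ∫⁻ z, ENNReal.ofReal (w z) ∂volume := by
    apply ofReal_integral_eq_lintegral_ofReal (w_integrable ρ hd ha hs0 hs1)
    filter_upwards with z
    have h0 : (0:ℝ) ≤ (‖1 - (s:ℂ) * chf ρ z‖^2)⁻¹ := by positivity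
    exact mul_nonneg (gK_nonneg a z) h0
  have enn3 : ∫⁻ z, ENNReal.ofReal (w z) ∂volume
      = ∫⁻ z in Metric.ball (0 : EuclideanSpace ℝ (Fin d)) (Real.sqrt d * a),
          ENNReal.ofReal (w z) ∂volume := by
    rw [← lintegral_indicator measurableSet_ball]
    congr 1
    funext z
    by_cases hz : z ∈ Metric.ball (0 : EuclideanSpace ℝ (Fin d)) (Real.sqrt d * a)
    · rw [Set.indicator_of_mem hz]
    · rw [Set.indicator_of_notMem hz]
      rw [Metric.mem_ball, dist_zero_right, not_lt] at hz
      have : gK a z = 0 := gK_eq_zero ha hd hz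
      simp [hw_def, this]
  have enn4 : ∫⁻ z in Metric.ball (0 : EuclideanSpace ℝ (Fin d)) (Real.sqrt d * a),
      ENNReal.ofReal (w z) ∂volume ≤ ENNReal.ofReal (a^d) * L := by
    have hpt : ∀ z : EuclideanSpace ℝ (Fin d), ENNReal.ofReal (w z)
        ≤ ENNReal.ofReal (a^d) * (ENNReal.ofReal (‖1 - (s:ℂ) * chf ρ z‖^2))⁻¹ := by
      intro z
      have hnpos : (0:ℝ) < ‖1 - (s:ℂ) * chf ρ z‖^2 := by
        have h0 : 0 < ‖1 - (s:ℂ) * chf ρ z‖ :=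
          lt_of_lt_of_le (by linarith) (norm_one_sub_ge ρ hs0 hs1 z)
        positivity
      calc ENNReal.ofReal (w z)
          ≤ ENNReal.ofReal (a^d * (‖1 - (s:ℂ) * chf ρ z‖^2)⁻¹) := by
            apply ENNReal.ofReal_le_ofReal
            exact mul_le_mul_of_nonneg_right (gK_le ha z) (by positivity)
        _ = ENNReal.ofReal (a^d) * (ENNReal.ofReal (‖1 - (s:ℂ) * chf ρ z‖^2))⁻¹ := by
            rw [ENNReal.ofReal_mul (by positivity), ENNReal.ofReal_inv_of_pos hnpos]
    calc ∫⁻ z in Metric.ball (0 : EuclideanSpace ℝ (Fin d)) (Real.sqrt d * a),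
        ENNReal.ofReal (w z) ∂volume
        ≤ ∫⁻ z in Metric.ball (0 : EuclideanSpace ℝ (Fin d)) (Real.sqrt d * a),
          ENNReal.ofReal (a^d) * (ENNReal.ofReal (‖1 - (s:ℂ) * chf ρ z‖^2))⁻¹ ∂volume :=
          lintegral_mono fun z => hpt z
      _ = ENNReal.ofReal (a^d) * L := lintegral_const_mul' _ _ ENNReal.ofReal_ne_top
  have chain : ENNReal.ofReal c₀ * M (Metric.ball 0 r) ≤ ENNReal.ofReal (a^d) * L := by
    calc ENNReal.ofReal c₀ * M (Metric.ball 0 r)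
        ≤ ENNReal.ofReal (∫ x, phiF a x ∂M) := enn1
      _ = ENNReal.ofReal (∫ z, w z ∂volume) := by rw [hJ]
      _ = ∫⁻ z, ENNReal.ofReal (w z) ∂volume := enn2
      _ = _ := enn3
      _ ≤ ENNReal.ofReal (a^d) * L := enn4
  have hfin : M (Metric.ball 0 r) ≤ ENNReal.ofReal (c₀⁻¹ * a^d) * L := by
    have h1 : M (Metric.ball 0 r)
        = (ENNReal.ofReal c₀)⁻¹ * (ENNReal.ofReal c₀ * M (Metric.ball 0 r)) := by
      rw [← mul_assoc, ENNReal.inv_mul_cancel (ENNReal.ofReal_pos.mpr hc0).ne'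
        ENNReal.ofReal_ne_top, one_mul]
    rw [h1]
    calc (ENNReal.ofReal c₀)⁻¹ * (ENNReal.ofReal c₀ * M (Metric.ball 0 r))
        ≤ (ENNReal.ofReal c₀)⁻¹ * (ENNReal.ofReal (a^d) * L) := mul_le_mul_right chain _
      _ = ENNReal.ofReal (c₀⁻¹ * a^d) * L := by
          rw [← ENNReal.ofReal_inv_of_pos hc0, ← mul_assoc,
            ← ENNReal.ofReal_mul (by positivity)]
  exact hfin

end Master


end Aux

/-- For every `r > 0` there is a finite constant `c' > 0` (depending only
on `d` and `r`) with
`(U * U⁻)(B_0^r) ≤ c' · sup_{0 ≤ s < 1} ∫_{B_0^{√d/r}} |1 − s ρ̂(z)|^{−2} dz`. -/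
theorem stmt7 (d : ℕ) (hd : 1 ≤ d)
    (ρ : Measure (EuclideanSpace ℝ (Fin d))) [IsProbabilityMeasure ρ]
    (r : ℝ) (hr : 0 < r) :
    ∃ c' : ℝ, 0 < c' ∧
      mconv (occMeasure ρ) (occMeasure (mrefl ρ)) (Metric.ball 0 r) ≤
        ENNReal.ofReal c' *
          ⨆ s : Set.Ico (0 : ℝ) 1,
            ∫⁻ z in Metric.ball (0 : EuclideanSpace ℝ (Fin d)) (Real.sqrt d / r),
              (ENNReal.ofReal
                (‖(1 : ℂ) - ((s : ℝ) : ℂ) *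
                    ∫ x, Complex.exp (Complex.I * ((inner ℝ z x : ℝ) : ℂ)) ∂ρ‖ ^ 2))⁻¹
              ∂volume := by
  classical
  have hpi : (0:ℝ) < Real.pi := Real.pi_pos
  refine ⟨(((4/Real.pi^2) * r⁻¹^2)^d)⁻¹ * r⁻¹^d, by positivity, ?_⟩
  set c' : ℝ := (((4/Real.pi^2) * r⁻¹^2)^d)⁻¹ * r⁻¹^d with hc'
  set I : Set.Ico (0:ℝ) 1 → ENNReal := fun s =>
    ∫⁻ z in Metric.ball (0 : EuclideanSpace ℝ (Fin d)) (Real.sqrt d / r),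
      (ENNReal.ofReal (‖1 - (((s : ℝ)) : ℂ) * chf ρ z‖^2))⁻¹ ∂volume with hI
  suffices h : mconv (occMeasure ρ) (occMeasure (mrefl ρ)) (Metric.ball 0 r) ≤
      ENNReal.ofReal c' * ⨆ s : Set.Ico (0:ℝ) 1, I s by exact h
  have hball : Metric.ball (0 : EuclideanSpace ℝ (Fin d)) (Real.sqrt d / r)
      = Metric.ball 0 (Real.sqrt d * r⁻¹) := by rw [div_eq_mul_inv]
  set A : ℕ × ℕ → ENNReal := fun p =>
    mconv (convPow ρ p.1) (convPow (mrefl ρ) p.2) (Metric.ball 0 r) with hA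
  rw [occ_mconv_apply ρ measurableSet_ball, ENNReal.tsum_eq_iSup_sum]
  apply iSup_le
  intro F
  set sk : ℕ → ℝ := fun k => 1 - ((k:ℝ)+1)⁻¹ with hsk
  have hsk0 : ∀ k : ℕ, 0 ≤ sk k := by
    intro k
    have h1 : ((k:ℝ)+1)⁻¹ ≤ 1 := by
      rw [inv_le_one_iff₀]
      right; linarith [Nat.cast_nonneg (α := ℝ) k]
    simp only [hsk]; linarith
  have hsk1 : ∀ k : ℕ, sk k < 1 := by
    intro k
    have h1 : (0:ℝ) < ((k:ℝ)+1)⁻¹ := by positivity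
    simp only [hsk]; linarith
  have hlim : Filter.Tendsto sk Filter.atTop (nhds 1) := by
    have h0 : Filter.Tendsto (fun k : ℕ => ((k:ℝ)+1)⁻¹) Filter.atTop (nhds 0) := by
      simpa using (tendsto_one_div_add_atTop_nhds_zero_nat : Filter.Tendsto (fun n : ℕ => 1 / ((n:ℝ) + 1)) Filter.atTop (nhds 0))
    have := Filter.Tendsto.sub (tendsto_const_nhds (x := (1:ℝ))) h0
    simpa using this
  have hterm : ∀ p ∈ F, Filter.Tendsto
      (fun k => ENNReal.ofReal (sk k ^ (p.1+p.2)) * A p) Filter.atTop (nhds (A p)) := by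
    intro p _
    have h1 : Filter.Tendsto (fun k => sk k ^ (p.1+p.2)) Filter.atTop (nhds 1) := by
      simpa using hlim.pow (p.1+p.2)
    have h2 : Filter.Tendsto (fun k => ENNReal.ofReal (sk k ^ (p.1+p.2))) Filter.atTop
        (nhds 1) := by
      have := (ENNReal.continuous_ofReal.tendsto 1).comp h1
      simpa [Function.comp_def] using this
    have h3 := ENNReal.Tendsto.mul_const (b := A p) h2 (Or.inl one_ne_zero)
    simpa using h3
  have hsum_t : Filter.Tendsto (fun k => ∑ p ∈ F, ENNReal.ofReal (sk k ^ (p.1+p.2)) * A p)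
      Filter.atTop (nhds (∑ p ∈ F, A p)) := tendsto_finset_sum F hterm
  apply le_of_tendsto hsum_t
  filter_upwards with k
  calc ∑ p ∈ F, ENNReal.ofReal (sk k ^ (p.1+p.2)) * A p
      ≤ ∑' p : ℕ × ℕ, ENNReal.ofReal (sk k ^ (p.1+p.2)) * A p := ENNReal.sum_le_tsum F
    _ = mconv (geomM ρ (sk k)) (geomM (mrefl ρ) (sk k)) (Metric.ball 0 r) :=
        (geom_mconv_apply ρ (hsk0 k) measurableSet_ball).symm
    _ ≤ ENNReal.ofReal c' *
        ∫⁻ z in Metric.ball (0 : EuclideanSpace ℝ (Fin d)) (Real.sqrt d * r⁻¹),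
          (ENNReal.ofReal (‖1 - ((sk k : ℝ) : ℂ) * chf ρ z‖^2))⁻¹ ∂volume :=
        per_s_bound ρ hd hr (hsk0 k) (hsk1 k)
    _ = ENNReal.ofReal c' * I ⟨sk k, ⟨hsk0 k, hsk1 k⟩⟩ := by rw [hI]; rw [hball]
    _ ≤ ENNReal.ofReal c' * ⨆ s : Set.Ico (0:ℝ) 1, I s :=
        mul_le_mul_right (le_iSup I ⟨sk k, ⟨hsk0 k, hsk1 k⟩⟩) _
end

section
/- Let ρ be a probability measure on ℝ^d, and let U := Σ_{n=0}^∞ ρ^{*n} and U⁻ := Σ_{n=0}^∞ (ρ⁻)^{*n} with ρ⁻ := ρ(−·). Then for every x ∈ ℝ^d and every r > 0: (U * U⁻)(B_x^r) ≤ (U * U⁻)(B_0^{2r}), where B_x^r is the open Euclidean ball of radius r centered at x (each side may be infinite). -/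
open MeasureTheory

section Aux

open ENNReal NNReal Metric Set

variable {d : ℕ}

local notation "E" => EuclideanSpace ℝ (Fin d)

lemma aux_hadd : Measurable fun p : E × E => p.1 + p.2 := measurable_add

instance convPow_prob (ρ : Measure E) [IsProbabilityMeasure ρ] (n : ℕ) :
    IsProbabilityMeasure (convPow ρ n) := by
  induction n with
  | zero => exact Measure.dirac.isProbabilityMeasure
  | succ n ih =>
    show IsProbabilityMeasure (mconv (convPow ρ n) ρ)
    unfold mconv
    exact Measure.isProbabilityMeasure_map aux_hadd.aemeasurable

instance occ_sfinite (ρ : Measure E) [IsProbabilityMeasure ρ] : SFinite (occMeasure ρ) := by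
  unfold occMeasure; infer_instance

instance mrefl_prob (ρ : Measure E) [IsProbabilityMeasure ρ] :
    IsProbabilityMeasure (mrefl ρ) :=
  Measure.isProbabilityMeasure_map measurable_neg.aemeasurable

lemma mconv_neg (α β : Measure E) [SFinite α] [SFinite β] :
    mconv (α.map (fun z : E => -z)) (β.map (fun z : E => -z)) =
      (mconv α β).map (fun z : E => -z) := by
  unfold mconv
  rw [Measure.map_prod_map _ _ measurable_neg measurable_neg,
    Measure.map_map aux_hadd (measurable_neg.prodMap measurable_neg),
    Measure.map_map measurable_neg aux_hadd]
  congr 1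
  funext p
  show -p.1 + -p.2 = -(p.1 + p.2)
  abel

lemma convPow_neg (ρ : Measure E) [IsProbabilityMeasure ρ] (n : ℕ) :
    convPow (mrefl ρ) n = (convPow ρ n).map (fun z : E => -z) := by
  induction n with
  | zero =>
    rw [show convPow (mrefl ρ) 0 = Measure.dirac (0 : E) from rfl,
      show convPow ρ 0 = Measure.dirac (0 : E) from rfl,
      Measure.map_dirac' measurable_neg]
    simp
  | succ n ih =>
    show mconv (convPow (mrefl ρ) n) (mrefl ρ) = _
    rw [ih]
    exact mconv_neg (convPow ρ n) ρ

lemma occ_neg (ρ : Measure E) [IsProbabilityMeasure ρ] :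
    occMeasure (mrefl ρ) = (occMeasure ρ).map (fun z : E => -z) := by
  unfold occMeasure
  rw [Measure.map_sum measurable_neg.aemeasurable]
  congr 1
  funext n
  exact convPow_neg ρ n

/-- AM-GM in `ℝ≥0∞`: `2c ≤ m + c²·m⁻¹`, valid for all extended nonnegative reals. -/
lemma aux_amgm (c m : ℝ≥0∞) : 2 * c ≤ m + c ^ 2 * m⁻¹ := by
  rcases eq_or_ne m ∞ with rfl | hm
  · simp [top_add]
  rcases eq_or_ne m 0 with rfl | hm0
  · rcases eq_or_ne c 0 with rfl | hc0
    · simp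
    · rw [ENNReal.inv_zero, ENNReal.mul_top (pow_ne_zero 2 hc0)]
      simp
  rcases eq_or_ne c ∞ with rfl | hc
  · rw [ENNReal.top_pow (by norm_num), ENNReal.top_mul (ENNReal.inv_ne_zero.mpr hm)]
    simp
  lift m to ℝ≥0 using hm
  lift c to ℝ≥0 using hc
  have hm0' : m ≠ 0 := by simpa using hm0
  have hnn : (2 : ℝ≥0) * c ≤ m + c ^ 2 * m⁻¹ := by
    rw [← NNReal.coe_le_coe]
    push_cast
    have hmpos : (0 : ℝ) < (m : ℝ) := lt_of_le_of_ne (m.coe_nonneg) (by exact_mod_cast hm0'.symm)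
    have h1 : (c : ℝ) ^ 2 * (m : ℝ)⁻¹ = (c : ℝ) ^ 2 / m := by ring
    rw [h1, ← sub_le_iff_le_add', le_div_iff₀ hmpos]
    nlinarith [sq_nonneg ((c : ℝ) - (m : ℝ))]
  rw [← ENNReal.coe_inv hm0']
  exact_mod_cast hnn

lemma aux_inv_mul_le_one (a : ℝ≥0∞) : a⁻¹ * a ≤ 1 := by
  rcases eq_or_ne a 0 with rfl | h0
  · simp
  rcases eq_or_ne a ∞ with rfl | ht
  · simp
  rw [ENNReal.inv_mul_cancel h0 ht]

lemma aux_meas_ball (ξ : Measure E) [SFinite ξ] (s : ℝ) :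
    Measurable fun a : E => ξ (ball a s) := by
  have h : MeasurableSet {p : E × E | dist p.2 p.1 < s} :=
    (isOpen_lt (continuous_snd.dist continuous_fst) continuous_const).measurableSet
  exact measurable_measure_prodMk_left h

lemma aux_meas_ball' (ξ : Measure E) [SFinite ξ] (x : E) (s : ℝ) :
    Measurable fun a : E => ξ (ball (x - a) s) := by
  have h : MeasurableSet {p : E × E | dist p.2 (x - p.1) < s} :=
    (isOpen_lt (continuous_snd.dist (continuous_const.sub continuous_fst))
      continuous_const).measurableSet
  exact measurable_measure_prodMk_left h

/-- The key general inequality: for s-finite `μ` and `ν = neg_* μ`,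
`(μ * ν)(B(x,r)) ≤ (μ * ν)(B(0,2r))`. -/
lemma aux_key (μ : Measure E) [SFinite μ] (x : E) (r : ℝ) :
    mconv μ (μ.map (fun z : E => -z)) (ball x r) ≤
      mconv μ (μ.map (fun z : E => -z)) (ball 0 (2 * r)) := by
  set ν : Measure E := μ.map (fun z : E => -z) with hν
  haveI : SFinite ν := by rw [hν]; infer_instance
  have hballneg : ∀ (a : E) (s : ℝ), ν (ball (-a) s) = μ (ball a s) := by
    intro a s
    rw [hν, Measure.map_apply measurable_neg measurableSet_ball]
    congr 1
    ext z
    simp [dist_neg_neg, mem_ball]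
  -- expected occupation measures as integrals
  have hconv : ∀ (y : E) (s : ℝ),
      mconv μ ν (ball y s) = ∫⁻ a, ν (ball (y - a) s) ∂μ := by
    intro y s
    unfold mconv
    rw [Measure.map_apply aux_hadd measurableSet_ball,
      Measure.prod_apply (aux_hadd measurableSet_ball)]
    congr 1
    funext a
    congr 1
    ext w
    simp only [Set.mem_preimage, mem_ball, dist_eq_norm]
    rw [show a + w - y = w - (y - a) by abel]
  set m : E → ℝ≥0∞ := fun a => μ (ball a (2 * r)) with hmdef
  set c : E → ℝ≥0∞ := fun a => ν (ball (x - a) r) with hcdef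
  have hm : Measurable m := aux_meas_ball μ (2 * r)
  have hc : Measurable c := aux_meas_ball' ν x r
  have hLHS : mconv μ ν (ball x r) = ∫⁻ a, c a ∂μ := hconv x r
  have hRHS : mconv μ ν (ball 0 (2 * r)) = ∫⁻ a, m a ∂μ := by
    rw [hconv 0 (2 * r)]
    congr 1
    funext a
    rw [zero_sub, hballneg]
  set A : ℝ≥0∞ := ∫⁻ a, m a ∂μ with hA
  -- B = A
  have hB : ∫⁻ b, ν (ball b (2 * r)) ∂ν = A := by
    rw [hν, lintegral_map (aux_meas_ball ν (2 * r)) measurable_neg]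
    have : ∀ z : E, ν (ball (-z) (2 * r)) = m z := fun z => hballneg z (2 * r)
    simp_rw [this]
    rfl
  -- the core: Y ≤ A
  set Y : ℝ≥0∞ := ∫⁻ a, c a ^ 2 * (m a)⁻¹ ∂μ with hY
  have hYA : Y ≤ A := by
    -- rewrite Y as a double integral and swap
    set G : E × (E × E) → ℝ≥0∞ :=
      (fun q : E × (E × E) =>
        Set.indicator {q : E × (E × E) | dist q.2.1 (x - q.1) < r ∧ dist q.2.2 (x - q.1) < r}
          (fun q => (m q.1)⁻¹) q) with hG
    have hS3 : MeasurableSet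
        {q : E × (E × E) | dist q.2.1 (x - q.1) < r ∧ dist q.2.2 (x - q.1) < r} := by
      refine (IsOpen.measurableSet ?_)
      refine IsOpen.inter ?_ ?_
      · exact isOpen_lt ((continuous_fst.comp continuous_snd).dist
          (continuous_const.sub continuous_fst)) continuous_const
      · exact isOpen_lt ((continuous_snd.comp continuous_snd).dist
          (continuous_const.sub continuous_fst)) continuous_const
    have hGmeas : Measurable G :=
      (Measurable.indicator ((hm.comp measurable_fst).inv) hS3)
    have hstep1 : ∀ a : E, ∫⁻ p, G (a, p) ∂(ν.prod ν) = c a ^ 2 * (m a)⁻¹ := by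
      intro a
      have hset : (fun p : E × E => G (a, p)) =
          Set.indicator (ball (x - a) r ×ˢ ball (x - a) r) (fun _ => (m a)⁻¹) := by
        funext p
        by_cases hp : p ∈ ball (x - a) r ×ˢ ball (x - a) r
        · rw [Set.indicator_of_mem hp]
          exact Set.indicator_of_mem (by exact hp) _
        · rw [Set.indicator_of_notMem hp]
          exact Set.indicator_of_notMem (by exact hp) _
      rw [hset, lintegral_indicator (measurableSet_ball.prod measurableSet_ball),
        setLIntegral_const, Measure.prod_prod]
      rw [show ν (ball (x - a) r) * ν (ball (x - a) r) = c a ^ 2 by rw [hcdef]; ring]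
      ring
    have hswap : Y = ∫⁻ p, ∫⁻ a, G (a, p) ∂μ ∂(ν.prod ν) := by
      rw [hY]
      have : ∀ a : E, c a ^ 2 * (m a)⁻¹ = ∫⁻ p, G (a, p) ∂(ν.prod ν) :=
        fun a => (hstep1 a).symm
      simp_rw [this]
      exact lintegral_lintegral_swap hGmeas.aemeasurable
    rw [hswap]
    have hstep2 : ∀ p : E × E,
        ∫⁻ a, G (a, p) ∂μ ≤
          Set.indicator {q : E × E | dist q.1 q.2 < 2 * r} (fun _ => 1) p := by
      intro p
      set T : Set E := {a : E | dist p.1 (x - a) < r ∧ dist p.2 (x - a) < r} with hT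
      have hTmeas : MeasurableSet T := by
        refine (IsOpen.measurableSet ?_)
        refine IsOpen.inter ?_ ?_
        · exact isOpen_lt (continuous_const.dist (continuous_const.sub continuous_id))
            continuous_const
        · exact isOpen_lt (continuous_const.dist (continuous_const.sub continuous_id))
            continuous_const
      have hGT : (fun a : E => G (a, p)) = Set.indicator T (fun a => (m a)⁻¹) := by
        funext a
        by_cases ha : a ∈ T
        · rw [Set.indicator_of_mem ha]
          exact Set.indicator_of_mem (by exact ha) _
        · rw [Set.indicator_of_notMem ha]
          exact Set.indicator_of_notMem (by exact ha) _
      rw [hGT, lintegral_indicator hTmeas]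
      by_cases hbb : dist p.1 p.2 < 2 * r
      · have hub : ∀ a ∈ T, (m a)⁻¹ ≤ (μ T)⁻¹ := by
          intro a ha
          refine ENNReal.inv_le_inv.mpr ?_
          refine measure_mono ?_
          intro a' ha'
          have h1 : dist (x - a') (x - a) = dist a' a := dist_sub_left x a' a
          have h2 : dist (x - a') (x - a) ≤ dist (x - a') p.1 + dist p.1 (x - a) :=
            dist_triangle _ _ _
          have := ha'.1
          have := ha.1
          rw [mem_ball]
          rw [← h1]
          calc dist (x - a') (x - a) ≤ dist (x - a') p.1 + dist p.1 (x - a) := h2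
            _ < r + r := by
                have := ha'.1
                rw [dist_comm] at this
                exact add_lt_add this ha.1
            _ = 2 * r := by ring
        calc ∫⁻ a in T, (m a)⁻¹ ∂μ ≤ ∫⁻ _ in T, (μ T)⁻¹ ∂μ :=
              setLIntegral_mono measurable_const hub
          _ = (μ T)⁻¹ * μ T := setLIntegral_const T _
          _ ≤ 1 := aux_inv_mul_le_one _
          _ = Set.indicator {q : E × E | dist q.1 q.2 < 2 * r} (fun _ => 1) p := by
              rw [Set.indicator_of_mem
                (show p ∈ {q : E × E | dist q.1 q.2 < 2 * r} from hbb)]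
      · have hTempty : T = ∅ := by
          ext a
          simp only [Set.mem_empty_iff_false, iff_false, hT, Set.mem_setOf_eq]
          intro h
          apply hbb
          calc dist p.1 p.2 ≤ dist p.1 (x - a) + dist (x - a) p.2 := dist_triangle _ _ _
            _ < r + r := add_lt_add h.1 (by rw [dist_comm]; exact h.2)
            _ = 2 * r := by ring
        rw [hTempty]
        simp
    calc ∫⁻ p, ∫⁻ a, G (a, p) ∂μ ∂(ν.prod ν)
        ≤ ∫⁻ p, Set.indicator {q : E × E | dist q.1 q.2 < 2 * r} (fun _ => 1) p ∂(ν.prod ν) :=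
          lintegral_mono hstep2
      _ = (ν.prod ν) {q : E × E | dist q.1 q.2 < 2 * r} := by
          rw [lintegral_indicator, setLIntegral_one]
          exact (isOpen_lt (continuous_fst.dist continuous_snd) continuous_const).measurableSet
      _ = ∫⁻ b, ν (ball b (2 * r)) ∂ν := by
          rw [Measure.prod_apply
            (isOpen_lt (continuous_fst.dist continuous_snd) continuous_const).measurableSet]
          congr 1
          funext b
          congr 1
          ext b'
          simp [mem_ball, dist_comm]
      _ = A := hB
  -- put it together
  rw [hLHS, hRHS]
  have h2 : (2 : ℝ≥0∞) * ∫⁻ a, c a ∂μ ≤ 2 * A := by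
    rw [← lintegral_const_mul 2 hc]
    calc ∫⁻ a, 2 * c a ∂μ ≤ ∫⁻ a, (m a + c a ^ 2 * (m a)⁻¹) ∂μ :=
          lintegral_mono fun a => aux_amgm (c a) (m a)
      _ = A + Y := lintegral_add_left hm _
      _ ≤ A + A := add_le_add_right hYA A
      _ = 2 * A := by ring
  exact (ENNReal.mul_le_mul_iff_right (by norm_num) (by norm_num)).mp h2

end Aux

/-- Translation bound for the expected occupation measure of the
two-sided walk: `(U * U⁻)(B_x^r) ≤ (U * U⁻)(B_0^{2r})` for every `x` and `r > 0`. -/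
theorem stmt9 (d : ℕ) (hd : 1 ≤ d)
    (ρ : Measure (EuclideanSpace ℝ (Fin d))) [IsProbabilityMeasure ρ]
    (x : EuclideanSpace ℝ (Fin d)) (r : ℝ) (hr : 0 < r) :
    mconv (occMeasure ρ) (occMeasure (mrefl ρ)) (Metric.ball x r) ≤
      mconv (occMeasure ρ) (occMeasure (mrefl ρ)) (Metric.ball 0 (2 * r)) := by
  rw [occ_neg ρ]
  exact aux_key (occMeasure ρ) x r
end

section
/- Let F be a probability measure on ℝ with F((−∞,0)) = 0, and suppose there exist constants c > 0, x_0 > 0 and α ∈ (0, 1/2) such that ∫_{[0,T]} x² dF(x) ≥ c·T^{2−α} for all T ≥ x_0. Let F̂(z) = ∫ exp(izx) dF(x). Then there exists ε > 0 such that ∫_{−ε}^{ε} |1 − F̂(z)|^{−2} dz < ∞. -/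
open MeasureTheory

private lemma cos_quad {t : ℝ} (ht : |t| ≤ 1) : t ^ 2 / 3 ≤ 1 - Real.cos t := by
  have h := Real.cos_bound ht
  have h1 : Real.cos t - (1 - t ^ 2 / 2) ≤ |t| ^ 4 * (5 / 96) := le_of_abs_le h
  have h4 : |t| ^ 4 ≤ t ^ 2 := by
    have : |t| ^ 4 ≤ |t| ^ 2 := pow_le_pow_of_le_one (abs_nonneg t) ht (by norm_num)
    simpa [sq_abs] using this
  nlinarith

private lemma key (F : Measure ℝ) [IsProbabilityMeasure F]
    (c x₀ α : ℝ) (hc : 0 < c) (hx₀ : 0 < x₀)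
    (hmom : ∀ T : ℝ, x₀ ≤ T → c * T ^ (2 - α) ≤ ∫ x in Set.Icc 0 T, x ^ 2 ∂F)
    (z : ℝ) (hz : z ≠ 0) (hz2 : |z| ≤ x₀⁻¹) :
    c / 3 * |z| ^ α ≤ ‖(1 : ℂ) - ∫ x, Complex.exp (Complex.I * ((z * x : ℝ) : ℂ)) ∂F‖ := by
  have hzpos : 0 < |z| := abs_pos.mpr hz
  set T : ℝ := |z|⁻¹ with hTdef
  have hT : x₀ ≤ T := by
    rw [hTdef, ← inv_inv x₀]
    exact inv_anti₀ hzpos hz2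
  have hcont : Continuous fun x : ℝ => Complex.exp (Complex.I * ((z * x : ℝ) : ℂ)) := by
    continuity
  have hnorm : ∀ x : ℝ, ‖Complex.exp (Complex.I * ((z * x : ℝ) : ℂ))‖ = 1 := by
    intro x
    rw [Complex.norm_exp]
    simp
  have hg : Integrable (fun x : ℝ => Complex.exp (Complex.I * ((z * x : ℝ) : ℂ))) F :=
    (integrable_const (1 : ℝ)).mono' hcont.aestronglyMeasurable
      (Filter.Eventually.of_forall fun x => (hnorm x).le)
  have hrept : ∀ x : ℝ, (Complex.exp (Complex.I * ((z * x : ℝ) : ℂ))).re = Real.cos (z * x) := by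
    intro x
    rw [mul_comm]
    exact Complex.exp_ofReal_mul_I_re (z * x)
  have hre : (∫ x, Complex.exp (Complex.I * ((z * x : ℝ) : ℂ)) ∂F).re
      = ∫ x, Real.cos (z * x) ∂F :=
    calc (∫ x, Complex.exp (Complex.I * ((z * x : ℝ) : ℂ)) ∂F).re
        = RCLike.re (∫ x, Complex.exp (Complex.I * ((z * x : ℝ) : ℂ)) ∂F) := rfl
      _ = ∫ x, RCLike.re (Complex.exp (Complex.I * ((z * x : ℝ) : ℂ))) ∂F :=
          (integral_re hg).symm
      _ = ∫ x, Real.cos (z * x) ∂F := by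
          refine integral_congr_ae (Filter.Eventually.of_forall fun x => ?_)
          exact hrept x
  have hcos : Integrable (fun x : ℝ => Real.cos (z * x)) F :=
    (integrable_const (1 : ℝ)).mono' (by fun_prop : Continuous fun x : ℝ =>
      Real.cos (z * x)).aestronglyMeasurable
      (Filter.Eventually.of_forall fun x => by
        simpa using Real.abs_cos_le_one (z * x))
  have hsub : Integrable (fun x : ℝ => 1 - Real.cos (z * x)) F :=
    (integrable_const 1).sub hcos
  have hre2 : ((1 : ℂ) - ∫ x, Complex.exp (Complex.I * ((z * x : ℝ) : ℂ)) ∂F).re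
      = ∫ x, (1 - Real.cos (z * x)) ∂F := by
    rw [Complex.sub_re, Complex.one_re, hre, integral_sub (integrable_const 1) hcos]
    simp [measure_univ]
  -- integrability of x ↦ (z*x)^2/3 on Icc 0 T
  have hIcc1 : IntegrableOn (fun x : ℝ => (z * x) ^ 2 / 3) (Set.Icc 0 T) F :=
    (by fun_prop : Continuous fun x : ℝ => (z * x) ^ 2 / 3).integrableOn_Icc
  have step1 : ∫ x in Set.Icc 0 T, (z * x) ^ 2 / 3 ∂F
      ≤ ∫ x in Set.Icc 0 T, (1 - Real.cos (z * x)) ∂F := by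
    refine setIntegral_mono_on hIcc1 hsub.integrableOn measurableSet_Icc fun x hx => ?_
    refine cos_quad ?_
    have hx0 : 0 ≤ x := hx.1
    have hxT : x ≤ T := hx.2
    calc |z * x| = |z| * x := by rw [abs_mul, abs_of_nonneg hx0]
      _ ≤ |z| * T := by gcongr
      _ = 1 := by rw [hTdef]; field_simp
  have step2 : ∫ x in Set.Icc 0 T, (1 - Real.cos (z * x)) ∂F
      ≤ ∫ x, (1 - Real.cos (z * x)) ∂F := by
    refine setIntegral_le_integral hsub (Filter.Eventually.of_forall fun x => ?_)
    have := Real.cos_le_one (z * x)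
    simp only [Pi.zero_apply]
    linarith
  have hpow : z ^ 2 * T ^ (2 - α) = |z| ^ α := by
    have h2 : z ^ 2 = |z| ^ ((2 : ℕ) : ℝ) := by rw [Real.rpow_natCast, sq_abs]
    rw [h2, hTdef, Real.inv_rpow (abs_nonneg z), ← Real.rpow_neg (abs_nonneg z),
      ← Real.rpow_add hzpos]
    norm_num
  have step0 : c / 3 * |z| ^ α ≤ ∫ x in Set.Icc 0 T, (z * x) ^ 2 / 3 ∂F := by
    have heq : ∫ x in Set.Icc 0 T, (z * x) ^ 2 / 3 ∂F
        = z ^ 2 / 3 * ∫ x in Set.Icc 0 T, x ^ 2 ∂F := by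
      rw [← integral_const_mul]
      refine integral_congr_ae (Filter.Eventually.of_forall fun x => ?_)
      ring
    rw [heq]
    have h1 := hmom T hT
    have h2 : z ^ 2 / 3 * (c * T ^ (2 - α)) ≤ z ^ 2 / 3 * ∫ x in Set.Icc 0 T, x ^ 2 ∂F := by
      gcongr
    calc c / 3 * |z| ^ α = z ^ 2 / 3 * (c * T ^ (2 - α)) := by rw [← hpow]; ring
      _ ≤ _ := h2
  calc c / 3 * |z| ^ α
      ≤ ((1 : ℂ) - ∫ x, Complex.exp (Complex.I * ((z * x : ℝ) : ℂ)) ∂F).re := by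
        rw [hre2]; linarith
    _ ≤ ‖(1 : ℂ) - ∫ x, Complex.exp (Complex.I * ((z * x : ℝ) : ℂ)) ∂F‖ := by
        exact Complex.re_le_norm _

/-- Let `F` be a probability measure on `ℝ` supported on `[0,∞)` whose
truncated second moments satisfy `∫_{[0,T]} x² dF(x) ≥ c T^{2−α}` for `T ≥ x₀`, with
`α ∈ (0,1/2)`. Then `∫_{−ε}^{ε} |1 − F̂(z)|^{−2} dz < ∞` for some `ε > 0`. -/
theorem stmt14 (F : Measure ℝ) [IsProbabilityMeasure F]
    (hneg : F (Set.Iio 0) = 0)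
    (c x₀ α : ℝ) (hc : 0 < c) (hx₀ : 0 < x₀) (hα : 0 < α) (hα2 : α < 1 / 2)
    (hmom : ∀ T : ℝ, x₀ ≤ T → c * T ^ (2 - α) ≤ ∫ x in Set.Icc 0 T, x ^ 2 ∂F) :
    ∃ ε : ℝ, 0 < ε ∧
      (∫⁻ z in Set.Ioo (-ε) ε,
        (ENNReal.ofReal
          (‖(1 : ℂ) - ∫ x, Complex.exp (Complex.I * ((z * x : ℝ) : ℂ)) ∂F‖ ^ 2))⁻¹
        ∂volume) < ⊤ := by
  set ε : ℝ := x₀⁻¹ with hεdef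
  have hε : 0 < ε := inv_pos.mpr hx₀
  refine ⟨ε, hε, ?_⟩
  set S : Set ℝ := Set.Ioo (-ε) ε with hSdef
  -- a.e. facts
  have hmem : ∀ᵐ z ∂volume.restrict S, z ∈ S := ae_restrict_mem measurableSet_Ioo
  have h0 : ∀ᵐ z ∂volume.restrict S, z ≠ 0 := by
    refine ae_restrict_of_ae ?_
    rw [ae_iff]
    have hset : {z : ℝ | ¬ z ≠ 0} = {0} := by ext z; simp
    rw [hset]
    exact measure_singleton 0
  have hbound : ∀ᵐ z ∂volume.restrict S,
      (ENNReal.ofReal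
          (‖(1 : ℂ) - ∫ x, Complex.exp (Complex.I * ((z * x : ℝ) : ℂ)) ∂F‖ ^ 2))⁻¹
        ≤ ENNReal.ofReal ((3 / c) ^ 2 * |z| ^ (-(2 * α))) := by
    filter_upwards [hmem, h0] with z hzS hz0
    have hzabs : |z| ≤ x₀⁻¹ := le_of_lt (abs_lt.mpr ⟨hzS.1, hzS.2⟩)
    have hk := key F c x₀ α hc hx₀ hmom z hz0 hzabs
    have hzpos : 0 < |z| := abs_pos.mpr hz0
    have hpos : 0 < c / 3 * |z| ^ α :=
      mul_pos (by linarith) (Real.rpow_pos_of_pos hzpos α)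
    have hsq : (c / 3 * |z| ^ α) ^ 2
        ≤ ‖(1 : ℂ) - ∫ x, Complex.exp (Complex.I * ((z * x : ℝ) : ℂ)) ∂F‖ ^ 2 :=
      pow_le_pow_left₀ hpos.le hk 2
    calc (ENNReal.ofReal
          (‖(1 : ℂ) - ∫ x, Complex.exp (Complex.I * ((z * x : ℝ) : ℂ)) ∂F‖ ^ 2))⁻¹
        ≤ (ENNReal.ofReal ((c / 3 * |z| ^ α) ^ 2))⁻¹ :=
          ENNReal.inv_le_inv' (ENNReal.ofReal_le_ofReal hsq)
      _ = ENNReal.ofReal (((c / 3 * |z| ^ α) ^ 2)⁻¹) :=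
          (ENNReal.ofReal_inv_of_pos (pow_pos hpos 2)).symm
      _ = ENNReal.ofReal ((3 / c) ^ 2 * |z| ^ (-(2 * α))) := by
          congr 1
          have habs : (|z| ^ α) ^ (2 : ℕ) = |z| ^ (2 * α) := by
            rw [← Real.rpow_natCast (|z| ^ α) 2, ← Real.rpow_mul (abs_nonneg z)]
            norm_num [mul_comm]
          rw [mul_pow, habs, mul_inv, ← Real.rpow_neg (abs_nonneg z)]
          congr 1
          rw [← inv_pow, inv_div]
  have hr : (-1 : ℝ) < -(2 * α) := by linarith
  have A0 : IntegrableOn (fun x : ℝ => x ^ (-(2 * α))) (Set.Ioo 0 ε) volume :=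
    (intervalIntegral.integrableOn_Ioo_rpow_iff hε).mpr hr
  have A : IntegrableOn (fun x : ℝ => |x| ^ (-(2 * α))) (Set.Ioo 0 ε) volume :=
    A0.congr_fun (fun x hx => by rw [abs_of_pos hx.1]) measurableSet_Ioo
  have AI : IntervalIntegrable (fun x : ℝ => |x| ^ (-(2 * α))) volume 0 ε := by
    rw [intervalIntegrable_iff_integrableOn_Ioo_of_le hε.le]; exact A
  have BI : IntervalIntegrable (fun x : ℝ => |x| ^ (-(2 * α))) volume (-ε) 0 := by
    have := ((IntervalIntegrable.iff_comp_neg (by simp)).mp AI).symm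
    simpa [abs_neg] using this
  have CI := BI.trans AI
  rw [intervalIntegrable_iff_integrableOn_Ioo_of_le (by linarith : -ε ≤ ε)] at CI
  have hint : IntegrableOn (fun z : ℝ => (3 / c) ^ 2 * |z| ^ (-(2 * α))) S volume :=
    CI.const_mul _
  calc (∫⁻ z in S,
        (ENNReal.ofReal
          (‖(1 : ℂ) - ∫ x, Complex.exp (Complex.I * ((z * x : ℝ) : ℂ)) ∂F‖ ^ 2))⁻¹
        ∂volume)
      ≤ ∫⁻ z in S, ENNReal.ofReal ((3 / c) ^ 2 * |z| ^ (-(2 * α))) ∂volume :=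
        lintegral_mono_ae hbound
    _ < ⊤ := hint.setLIntegral_lt_top
end
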